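/- arXiv:1410.0520 — 11 statements merged into one kernel-verified Lean document; each statement's English description precedes it below -/
import Mathlib

section
/- Let g : [0,1] → ℝ be continuous with g(0) = 0 and x ≥ 0. Define φ(t) = max{0, max_{0 ≤ s ≤ t} -(x + g(s))} and f(t) = x + φ(t) + g(t). Then φ is nondecreasing, continuous, φ(0) = 0, and f(t) ≥ 0 for all t ∈ [0,1]. -/
open Set

/-- The explicit Skorohod map: for continuous `g` on `[0,1]` with `g 0 = 0` and `x ≥ 0`,
the regulator `φ t = max {0, max_{0 ≤ s ≤ t} -(x + g s)}` is nondecreasing, continuous,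
starts at `0`, and the reflected path `f = x + φ + g` is nonnegative on `[0,1]`. -/
theorem skorohod_map_properties (g : ℝ → ℝ) (x : ℝ)
    (hg : ContinuousOn g (Icc 0 1)) (hg0 : g 0 = 0) (hx : 0 ≤ x)
    (φ f : ℝ → ℝ)
    (hφ : ∀ t, φ t = max 0 (sSup ((fun s => -(x + g s)) '' Icc 0 t)))
    (hf : ∀ t, f t = x + φ t + g t) :
    MonotoneOn φ (Icc 0 1) ∧ ContinuousOn φ (Icc 0 1) ∧ φ 0 = 0 ∧
      ∀ t ∈ Icc (0 : ℝ) 1, 0 ≤ f t := by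
  set k : ℝ → ℝ := fun s => -(x + g s) with hk
  set h : ℝ → ℝ := fun s => max 0 (k s) with hh
  have hkc : ContinuousOn k (Icc 0 1) := (continuousOn_const.add hg).neg
  have hhc : ContinuousOn h (Icc 0 1) :=
    (continuous_const.max continuous_id).comp_continuousOn hkc
  have hbdd : ∀ t ∈ Icc (0:ℝ) 1, BddAbove (k '' Icc 0 t) := fun t ht =>
    ((isCompact_Icc.image_of_continuousOn hkc).bddAbove).mono
      (image_mono (Icc_subset_Icc le_rfl ht.2))
  have hbddh : ∀ t ∈ Icc (0:ℝ) 1, BddAbove (h '' Icc 0 t) := fun t ht =>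
    ((isCompact_Icc.image_of_continuousOn hhc).bddAbove).mono
      (image_mono (Icc_subset_Icc le_rfl ht.2))
  have hne : ∀ t ∈ Icc (0:ℝ) 1, (Icc (0:ℝ) t).Nonempty := fun t ht => nonempty_Icc.2 ht.1
  have hmax : Monotone (fun y : ℝ => max 0 y) := fun a b hab => max_le_max le_rfl hab
  have hφ' : ∀ t ∈ Icc (0:ℝ) 1, φ t = sSup (h '' Icc 0 t) := by
    intro t ht
    rw [hφ]
    have hcont : ContinuousAt (fun y : ℝ => max 0 y) (sSup (k '' Icc 0 t)) :=
      (continuous_const.max continuous_id).continuousAt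
    have := hmax.map_csSup_of_continuousAt hcont ((hne t ht).image k) (hbdd t ht)
    rw [this, image_image]
  have hmono : MonotoneOn φ (Icc 0 1) := by
    intro s hs t ht hst
    rw [hφ' s hs, hφ' t ht]
    exact csSup_le_csSup (hbddh t ht) ((hne s hs).image h)
      (image_mono (Icc_subset_Icc le_rfl hst))
  have hht : ∀ t ∈ Icc (0:ℝ) 1, h t ≤ φ t := by
    intro t ht
    rw [hφ' t ht]
    exact le_csSup (hbddh t ht) (mem_image_of_mem h ⟨ht.1, le_rfl⟩)
  refine ⟨hmono, ?_, ?_, ?_⟩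
  · -- continuity
    rw [Metric.continuousOn_iff]
    intro b hb ε hε
    obtain ⟨δ, hδ, hu⟩ := Metric.uniformContinuousOn_iff.1
      (isCompact_Icc.uniformContinuousOn_of_continuous hhc) (ε/2) (by linarith)
    refine ⟨δ, hδ, fun a ha hab => ?_⟩
    have key : ∀ s ∈ Icc (0:ℝ) 1, ∀ t ∈ Icc (0:ℝ) 1, s ≤ t → t - s < δ →
        φ t ≤ φ s + ε/2 := by
      intro s hs t ht hst hd
      rw [hφ' t ht]
      refine csSup_le ((hne t ht).image h) ?_
      rintro y ⟨u, hu', rfl⟩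
      have hu1 : u ∈ Icc (0:ℝ) 1 := ⟨hu'.1, hu'.2.trans ht.2⟩
      rcases le_or_gt u s with hus | hus
      · have : h u ≤ φ s := by
          rw [hφ' s hs]
          exact le_csSup (hbddh s hs) (mem_image_of_mem h ⟨hu'.1, hus⟩)
        linarith
      · have hd' : dist u s < δ := by
          rw [Real.dist_eq, abs_of_pos (by linarith)]
          linarith [hu'.2]
        have := hu u hu1 s hs hd'
        rw [Real.dist_eq] at this
        have h1 : h u ≤ h s + ε/2 := by cases abs_lt.1 this; linarith
        have h2 : h s ≤ φ s := hht s hs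
        linarith
    rw [Real.dist_eq]
    rw [Real.dist_eq] at hab
    rcases le_total a b with hab' | hab'
    · have h1 : φ a ≤ φ b := hmono ha hb hab'
      have h2 : φ b ≤ φ a + ε/2 := key a ha b hb hab' (by cases abs_lt.1 hab; linarith)
      rw [abs_of_nonpos (by linarith)]; linarith
    · have h1 : φ b ≤ φ a := hmono hb ha hab'
      have h2 : φ a ≤ φ b + ε/2 := key b hb a ha hab' (by cases abs_lt.1 hab; linarith)
      rw [abs_of_nonneg (by linarith)]; linarith
  · rw [hφ, Icc_self, image_singleton, csSup_singleton]
    have : k 0 = -x := by simp [hk, hg0]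
    rw [this, max_eq_left (by linarith)]
  · intro t ht
    have h1 : k t ≤ h t := le_max_right _ _
    have h2 : h t ≤ φ t := hht t ht
    have h1' : -(x + g t) ≤ h t := h1
    rw [hf]
    linarith
end

section
/- Let g : [0,1] → ℝ be continuous with g(0) = 0 and x ≥ 0. Define φ(t) = max{0, max_{0 ≤ s ≤ t} -(x + g(s))} and f(t) = x + φ(t) + g(t). If f(t₀) > 0 for all t₀ in an interval (a,b) ⊆ [0,1], then φ is constant on (a,b). -/
open Set

/-- The Skorohod regulator `φ` is constant on any open interval `(a,b) ⊆ [0,1]`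
on which the reflected path `f = x + φ + g` is strictly positive. -/
theorem skorohod_regulator_constant (g : ℝ → ℝ) (x : ℝ)
    (hg : ContinuousOn g (Icc 0 1)) (hg0 : g 0 = 0) (hx : 0 ≤ x)
    (φ f : ℝ → ℝ)
    (hφ : ∀ t, φ t = max 0 (sSup ((fun s => -(x + g s)) '' Icc 0 t)))
    (hf : ∀ t, f t = x + φ t + g t)
    (a b : ℝ) (hab : Ioo a b ⊆ Icc 0 1)
    (hpos : ∀ t ∈ Ioo a b, 0 < f t) :
    ∀ s ∈ Ioo a b, ∀ t ∈ Ioo a b, φ s = φ t := by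
  have key : ∀ s ∈ Ioo a b, ∀ t ∈ Ioo a b, s ≤ t → φ s = φ t := by
    intro s hs t ht hst
    have hsI : s ∈ Icc 0 1 := hab hs
    have htI : t ∈ Icc 0 1 := hab ht
    have hgt : ContinuousOn (fun u => -(x + g u)) (Icc 0 t) := by
      exact (continuousOn_const.add (hg.mono (Icc_subset_Icc le_rfl htI.2))).neg
    obtain ⟨u, huI, humax⟩ :=
      isCompact_Icc.exists_isMaxOn (nonempty_Icc.2 htI.1) hgt
    have hGt : IsGreatest ((fun s => -(x + g s)) '' Icc 0 t) (-(x + g u)) := by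
      constructor
      · exact mem_image_of_mem _ huI
      · rintro _ ⟨v, hv, rfl⟩; exact humax hv
    have bddT : BddAbove ((fun s => -(x + g s)) '' Icc 0 t) := ⟨_, hGt.2⟩
    have hsup_t : sSup ((fun s => -(x + g s)) '' Icc 0 t) = -(x + g u) :=
      hGt.csSup_eq
    have hmono : ∀ p, 0 ≤ p → p ≤ t → φ p ≤ φ t := by
      intro p hp0 hpt
      rw [hφ p, hφ t]
      refine max_le_max le_rfl (csSup_le_csSup bddT ?_ ?_)
      · exact (nonempty_Icc.2 hp0).image _
      · exact image_mono (Icc_subset_Icc le_rfl hpt)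
    by_contra hne
    have hlt : φ s < φ t := lt_of_le_of_ne (hmono s hsI.1 hst) hne
    have hφs0 : 0 ≤ φ s := by rw [hφ s]; exact le_max_left _ _
    have hφtpos : 0 < φ t := lt_of_le_of_lt hφs0 hlt
    have hv : 0 < -(x + g u) := by
      by_contra h
      push_neg at h
      rw [hφ t, hsup_t, max_eq_left h] at hφtpos
      exact lt_irrefl _ hφtpos
    have hφt : φ t = -(x + g u) := by
      rw [hφ t, hsup_t, max_eq_right hv.le]
    have hsu : s < u := by
      by_contra h
      push_neg at h
      have hmem : -(x + g u) ∈ (fun s => -(x + g s)) '' Icc 0 s :=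
        mem_image_of_mem _ ⟨huI.1, h⟩
      have bddS : BddAbove ((fun s => -(x + g s)) '' Icc 0 s) :=
        bddT.mono (image_mono (Icc_subset_Icc le_rfl hst))
      have h1 : -(x + g u) ≤ sSup ((fun s => -(x + g s)) '' Icc 0 s) :=
        le_csSup bddS hmem
      have h2 : φ t ≤ φ s := by
        rw [hφ s, hφt]
        exact le_max_of_le_right h1
      exact absurd (lt_of_le_of_lt h2 hlt) (lt_irrefl _)
    have huab : u ∈ Ioo a b := ⟨lt_trans hs.1 hsu, lt_of_le_of_lt huI.2 ht.2⟩
    have hfu := hpos u huab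
    have hφu : φ u ≤ φ t := hmono u huI.1 huI.2
    rw [hf u] at hfu
    rw [hφt] at hφu
    linarith
  intro s hs t ht
  rcases le_total s t with h | h
  · exact key s hs t ht h
  · exact (key t ht s hs h).symm
end

section
/- Uniqueness of the Skorohod problem: Let g : [0,1] → ℝ be continuous with g(0)=0 and x ≥ 0. Suppose (f₁, φ₁) and (f₂, φ₂) both satisfy: φᵢ is continuous, nondecreasing, φᵢ(0)=0, fᵢ(t) = x + φᵢ(t) + g(t) ≥ 0 for all t, and φᵢ increases only at times t where fᵢ(t) = 0 (i.e., the Stieltjes measure dφᵢ is supported on {t : fᵢ(t)=0}). Then f₁ = f₂ and φ₁ = φ₂. -/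
open Set Filter Topology

lemma skorohod_aux (f₁ φ₁ f₂ φ₂ : ℝ → ℝ)
    (hφ₁c : ContinuousOn φ₁ (Icc 0 1))
    (hφ₂c : ContinuousOn φ₂ (Icc 0 1))
    (hφ₂m : MonotoneOn φ₂ (Icc 0 1))
    (hφ₁0 : φ₁ 0 = 0) (hφ₂0 : φ₂ 0 = 0)
    (hdiff : ∀ u ∈ Icc (0 : ℝ) 1, f₁ u - f₂ u = φ₁ u - φ₂ u)
    (hf₂ : ∀ u ∈ Icc (0 : ℝ) 1, 0 ≤ f₂ u)
    (hsupp₁ : ∀ s ∈ Icc (0 : ℝ) 1, ∀ t ∈ Icc (0 : ℝ) 1, s ≤ t →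
      (∀ u ∈ Icc s t, 0 < f₁ u) → φ₁ s = φ₁ t) :
    ∀ t ∈ Icc (0 : ℝ) 1, φ₁ t ≤ φ₂ t := by
  intro t ht
  by_contra hlt
  push_neg at hlt
  set S : Set ℝ := {u | u ∈ Icc 0 t ∧ φ₁ u ≤ φ₂ u} with hS
  have h0S : (0 : ℝ) ∈ S := ⟨⟨le_refl 0, ht.1⟩, by rw [hφ₁0, hφ₂0]⟩
  have hSne : S.Nonempty := ⟨0, h0S⟩
  have hSbdd : BddAbove S := ⟨t, fun u hu => hu.1.2⟩
  set s := sSup S with hs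
  have hs0 : 0 ≤ s := le_csSup hSbdd h0S
  have hst : s ≤ t := csSup_le hSne fun u hu => hu.1.2
  have hsIcc : s ∈ Icc (0 : ℝ) 1 := ⟨hs0, hst.trans ht.2⟩
  have hSsub : S ⊆ Icc (0 : ℝ) 1 := fun u hu => ⟨hu.1.1, hu.1.2.trans ht.2⟩
  -- s is in the closure of S
  have hscl : s ∈ closure S := by
    exact csSup_mem_closure hSne hSbdd
  have hne : (𝓝[S] s).NeBot := mem_closure_iff_nhdsWithin_neBot.mp hscl
  -- φ₁ s ≤ φ₂ s by continuity
  have hφs : φ₁ s ≤ φ₂ s := by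
    have hct : Tendsto (fun u => φ₁ u - φ₂ u) (𝓝[S] s) (𝓝 (φ₁ s - φ₂ s)) := by
      have := ((hφ₁c s hsIcc).sub (hφ₂c s hsIcc)).tendsto
      exact this.mono_left (nhdsWithin_mono s hSsub)
    have hle : ∀ᶠ u in 𝓝[S] s, φ₁ u - φ₂ u ≤ 0 :=
      eventually_nhdsWithin_of_forall fun u hu => sub_nonpos.mpr hu.2
    have := le_of_tendsto hct hle
    linarith
  have hstlt : s < t := by
    rcases lt_or_eq_of_le hst with h | h
    · exact h
    · exfalso; rw [h] at hφs; linarith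
  -- on (s, t], φ₂ < φ₁, hence f₁ > 0
  have hIocsub : Ioc s t ⊆ Icc (0 : ℝ) 1 :=
    fun u hu => ⟨hs0.trans hu.1.le, hu.2.trans ht.2⟩
  have hpos : ∀ u ∈ Ioc s t, 0 < f₁ u := by
    intro u hu
    have huI : u ∈ Icc (0 : ℝ) 1 := hIocsub hu
    have hnot : ¬ φ₁ u ≤ φ₂ u := by
      intro hle
      have : u ∈ S := ⟨⟨hs0.trans hu.1.le, hu.2⟩, hle⟩
      exact absurd (le_csSup hSbdd this) (not_le.mpr hu.1)
    push_neg at hnot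
    have := hdiff u huI
    have := hf₂ u huI
    linarith
  -- φ₁ constant on (s, t]
  have hconst : ∀ u ∈ Ioc s t, φ₁ u = φ₁ t := by
    intro u hu
    exact hsupp₁ u (hIocsub hu) t ht hu.2 fun v hv =>
      hpos v ⟨hu.1.trans_le hv.1, hv.2⟩
  -- by continuity at s, φ₁ s = φ₁ t
  have hne2 : (𝓝[Ioc s t] s).NeBot := by
    refine mem_closure_iff_nhdsWithin_neBot.mp ?_
    rw [closure_Ioc hstlt.ne]
    exact ⟨le_refl s, hstlt.le⟩
  have h1 : Tendsto φ₁ (𝓝[Ioc s t] s) (𝓝 (φ₁ s)) :=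
    (hφ₁c s hsIcc).tendsto.mono_left (nhdsWithin_mono s hIocsub)
  have h2 : Tendsto φ₁ (𝓝[Ioc s t] s) (𝓝 (φ₁ t)) := by
    refine Tendsto.congr' ?_ tendsto_const_nhds
    exact eventually_nhdsWithin_of_forall fun u hu => (hconst u hu).symm
  have heq : φ₁ s = φ₁ t := tendsto_nhds_unique h1 h2
  have : φ₂ s ≤ φ₂ t := hφ₂m hsIcc ht hst
  linarith

/-- Uniqueness for the Skorohod problem: if `(f₁, φ₁)` and `(f₂, φ₂)` are two solutions
with continuous nondecreasing regulators starting at `0`, nonnegative reflected paths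
`fᵢ = x + φᵢ + g`, and regulators that are constant on every interval where `fᵢ > 0`
(i.e. `dφᵢ` is supported on `{fᵢ = 0}`), then the two solutions coincide on `[0,1]`. -/
theorem skorohod_uniqueness (g : ℝ → ℝ) (x : ℝ)
    (hg : ContinuousOn g (Icc 0 1)) (hg0 : g 0 = 0) (hx : 0 ≤ x)
    (f₁ φ₁ f₂ φ₂ : ℝ → ℝ)
    (hφ₁c : ContinuousOn φ₁ (Icc 0 1)) (hφ₁m : MonotoneOn φ₁ (Icc 0 1))
    (hφ₁0 : φ₁ 0 = 0)
    (hφ₂c : ContinuousOn φ₂ (Icc 0 1)) (hφ₂m : MonotoneOn φ₂ (Icc 0 1))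
    (hφ₂0 : φ₂ 0 = 0)
    (hf₁ : ∀ t ∈ Icc (0 : ℝ) 1, f₁ t = x + φ₁ t + g t ∧ 0 ≤ f₁ t)
    (hf₂ : ∀ t ∈ Icc (0 : ℝ) 1, f₂ t = x + φ₂ t + g t ∧ 0 ≤ f₂ t)
    (hsupp₁ : ∀ s ∈ Icc (0 : ℝ) 1, ∀ t ∈ Icc (0 : ℝ) 1, s ≤ t →
      (∀ u ∈ Icc s t, 0 < f₁ u) → φ₁ s = φ₁ t)
    (hsupp₂ : ∀ s ∈ Icc (0 : ℝ) 1, ∀ t ∈ Icc (0 : ℝ) 1, s ≤ t →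
      (∀ u ∈ Icc s t, 0 < f₂ u) → φ₂ s = φ₂ t) :
    ∀ t ∈ Icc (0 : ℝ) 1, f₁ t = f₂ t ∧ φ₁ t = φ₂ t := by
  have hd12 : ∀ u ∈ Icc (0 : ℝ) 1, f₁ u - f₂ u = φ₁ u - φ₂ u := by
    intro u hu
    have h1 := (hf₁ u hu).1
    have h2 := (hf₂ u hu).1
    rw [h1, h2]; ring
  have hd21 : ∀ u ∈ Icc (0 : ℝ) 1, f₂ u - f₁ u = φ₂ u - φ₁ u := by
    intro u hu; have := hd12 u hu; linarith
  have hle12 := skorohod_aux f₁ φ₁ f₂ φ₂ hφ₁c hφ₂c hφ₂m hφ₁0 hφ₂0 hd12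
    (fun u hu => (hf₂ u hu).2) hsupp₁
  have hle21 := skorohod_aux f₂ φ₂ f₁ φ₁ hφ₂c hφ₁c hφ₁m hφ₂0 hφ₁0 hd21
    (fun u hu => (hf₁ u hu).2) hsupp₂
  intro t ht
  have hφeq : φ₁ t = φ₂ t := le_antisymm (hle12 t ht) (hle21 t ht)
  refine ⟨?_, hφeq⟩
  have := hd12 t ht
  linarith
end

section
/- Lipschitz continuity of the Skorohod map: for continuous g₁, g₂ : [0,1] → ℝ with g₁(0) = g₂(0) = 0 and x ≥ 0, define fᵢ(t) = x + φᵢ(t) + gᵢ(t) where φᵢ(t) = max{0, max_{0 ≤ s ≤ t} -(x + gᵢ(s))}. Then sup_{t∈[0,1]} |f₁(t) - f₂(t)| ≤ 2 · sup_{t∈[0,1]} |g₁(t) - g₂(t)|. -/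
open Set

lemma skorohod_aux_s7 (g₁ g₂ : ℝ → ℝ) (x : ℝ)
    (hg₂ : ContinuousOn g₂ (Icc 0 1)) (t : ℝ) (ht : t ∈ Icc (0:ℝ) 1) (M : ℝ)
    (hM : ∀ s ∈ Icc (0:ℝ) 1, |g₁ s - g₂ s| ≤ M) :
    sSup ((fun s => -(x + g₁ s)) '' Icc 0 t) ≤
      sSup ((fun s => -(x + g₂ s)) '' Icc 0 t) + M := by
  have hsub : Icc (0:ℝ) t ⊆ Icc 0 1 := Icc_subset_Icc le_rfl ht.2
  have hne : (Icc (0:ℝ) t).Nonempty := ⟨0, le_rfl, ht.1⟩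
  have hc : ContinuousOn (fun s => -(x + g₂ s)) (Icc 0 t) :=
    (continuousOn_const.add (hg₂.mono hsub)).neg
  have hbdd : BddAbove ((fun s => -(x + g₂ s)) '' Icc 0 t) :=
    (isCompact_Icc.image_of_continuousOn hc).bddAbove
  apply csSup_le (hne.image _)
  rintro y ⟨s, hs, rfl⟩
  have h1 : -(x + g₂ s) ≤ sSup ((fun s => -(x + g₂ s)) '' Icc 0 t) :=
    le_csSup hbdd (mem_image_of_mem _ hs)
  have h2 : |g₁ s - g₂ s| ≤ M := hM s (hsub hs)
  have h3 : g₂ s - g₁ s ≤ M := by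
    have := neg_abs_le (g₁ s - g₂ s); linarith
  dsimp only; linarith

/-- The Skorohod map is 2-Lipschitz in supremum norm: if `fᵢ = x + φᵢ + gᵢ` with
`φᵢ t = max {0, max_{0 ≤ s ≤ t} -(x + gᵢ s)}`, then
`sup_{[0,1]} |f₁ - f₂| ≤ 2 sup_{[0,1]} |g₁ - g₂|`. -/
theorem skorohod_map_lipschitz (g₁ g₂ : ℝ → ℝ) (x : ℝ)
    (hg₁ : ContinuousOn g₁ (Icc 0 1)) (hg₂ : ContinuousOn g₂ (Icc 0 1))
    (hg₁0 : g₁ 0 = 0) (hg₂0 : g₂ 0 = 0) (hx : 0 ≤ x)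
    (φ₁ φ₂ f₁ f₂ : ℝ → ℝ)
    (hφ₁ : ∀ t, φ₁ t = max 0 (sSup ((fun s => -(x + g₁ s)) '' Icc 0 t)))
    (hφ₂ : ∀ t, φ₂ t = max 0 (sSup ((fun s => -(x + g₂ s)) '' Icc 0 t)))
    (hf₁ : ∀ t, f₁ t = x + φ₁ t + g₁ t)
    (hf₂ : ∀ t, f₂ t = x + φ₂ t + g₂ t) :
    ∀ t ∈ Icc (0 : ℝ) 1,
      |f₁ t - f₂ t| ≤ 2 * sSup ((fun s => |g₁ s - g₂ s|) '' Icc 0 1) := by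
  intro t ht
  set M := sSup ((fun s => |g₁ s - g₂ s|) '' Icc 0 1) with hMdef
  have habs : ContinuousOn (fun s => |g₁ s - g₂ s|) (Icc 0 1) := (hg₁.sub hg₂).abs
  have hbddM : BddAbove ((fun s => |g₁ s - g₂ s|) '' Icc 0 1) :=
    (isCompact_Icc.image_of_continuousOn habs).bddAbove
  have hM : ∀ s ∈ Icc (0:ℝ) 1, |g₁ s - g₂ s| ≤ M := fun s hs =>
    le_csSup hbddM (mem_image_of_mem _ hs)
  have h12 := skorohod_aux_s7 g₁ g₂ x hg₂ t ht M hM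
  have h21 := skorohod_aux_s7 g₂ g₁ x hg₁ t ht M (fun s hs => by
    rw [abs_sub_comm]; exact hM s hs)
  have hφdiff : |φ₁ t - φ₂ t| ≤ M := by
    rw [hφ₁, hφ₂]
    rw [max_comm 0 (sSup ((fun s => -(x + g₁ s)) '' Icc 0 t)),
        max_comm 0 (sSup ((fun s => -(x + g₂ s)) '' Icc 0 t))]
    refine (abs_max_sub_max_le_abs _ _ _).trans ?_
    rw [abs_le]; constructor <;> linarith
  have hgt : |g₁ t - g₂ t| ≤ M := hM t ht
  rw [hf₁, hf₂]
  have h1 := abs_sub_abs_le_abs_sub (φ₁ t) (φ₂ t)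
  calc |x + φ₁ t + g₁ t - (x + φ₂ t + g₂ t)| = |(φ₁ t - φ₂ t) + (g₁ t - g₂ t)| := by
        ring_nf
    _ ≤ |φ₁ t - φ₂ t| + |g₁ t - g₂ t| := abs_add_le _ _
    _ ≤ 2 * M := by linarith
end

section
/- Let g ∈ C¹([0,1]) with g(0) = 0, x ≥ 0, and ε > 0. Let f^ε : [0,1] → ℝ be a solution of the integral equation f^ε(t) = x + (1/ε)∫₀ᵗ (f^ε(s))⁻ ds + g(t). Then for all t ∈ [0,1], (f^ε(t))² ≤ (x² + ∫₀ᵗ (g'(s))² ds) · eᵗ. -/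
open Set intervalIntegral

/-- A priori bound for the penalized ODE: if `f^ε(t) = x + ε⁻¹∫₀ᵗ (f^ε(s))⁻ ds + g(t)`
with `g ∈ C¹([0,1])`, `g 0 = 0`, `x ≥ 0`, then
`(f^ε t)² ≤ (x² + ∫₀ᵗ (g' s)² ds) eᵗ` on `[0,1]`. -/
theorem penalized_ODE_square_bound (g g' : ℝ → ℝ) (x ε : ℝ)
    (hx : 0 ≤ x) (hε : 0 < ε) (hg0 : g 0 = 0)
    (hg' : ∀ t ∈ Icc (0 : ℝ) 1, HasDerivWithinAt g (g' t) (Icc 0 1) t)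
    (hg'c : ContinuousOn g' (Icc 0 1))
    (f : ℝ → ℝ) (hfc : ContinuousOn f (Icc 0 1))
    (hf : ∀ t ∈ Icc (0 : ℝ) 1,
      f t = x + ε⁻¹ * (∫ s in (0 : ℝ)..t, max (-(f s)) 0) + g t) :
    ∀ t ∈ Icc (0 : ℝ) 1,
      (f t) ^ 2 ≤ (x ^ 2 + ∫ s in (0 : ℝ)..t, (g' s) ^ 2) * Real.exp t := by
  -- clamp to [0,1]
  set c : ℝ → ℝ := fun t => min (max t 0) 1 with hc
  have hcmem : ∀ t, c t ∈ Icc (0:ℝ) 1 := fun t =>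
    ⟨le_min (le_max_right t 0) zero_le_one, min_le_right _ _⟩
  have hceq : ∀ t ∈ Icc (0:ℝ) 1, c t = t := fun t ht => by
    simp [hc, max_eq_left ht.1, min_eq_left ht.2]
  have hccont : Continuous c := (continuous_id.max continuous_const).min continuous_const
  set ftil : ℝ → ℝ := fun t => f (c t) with hftil
  have hftilc : Continuous ftil := hfc.comp_continuous hccont hcmem
  set gtil : ℝ → ℝ := fun t => g' (c t) with hgtil
  have hgtilc : Continuous gtil := hg'c.comp_continuous hccont hcmem
  set φ : ℝ → ℝ := fun s => max (-(ftil s)) 0 with hφ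
  have hφc : Continuous φ := (hftilc.neg).max continuous_const
  set F : ℝ → ℝ := fun t => ∫ s in (0:ℝ)..t, φ s with hF
  have hFd : ∀ t, HasDerivAt F (φ t) t := fun t =>
    (hφc.integral_hasStrictDerivAt 0 t).hasDerivAt
  have hsub : ∀ t ∈ Icc (0:ℝ) 1, Icc (0:ℝ) t ⊆ Icc (0:ℝ) 1 :=
    fun t ht => Icc_subset_Icc le_rfl ht.2
  have hf2 : ∀ t ∈ Icc (0:ℝ) 1, f t = x + ε⁻¹ * F t + g t := by
    intro t ht
    rw [hf t ht]
    have : (∫ s in (0:ℝ)..t, max (-(f s)) 0) = F t := by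
      apply intervalIntegral.integral_congr
      intro s hs
      rw [uIcc_of_le ht.1] at hs
      have hs1 : s ∈ Icc (0:ℝ) 1 := hsub t ht hs
      simp [hφ, hftil, hceq s hs1]
    rw [this]
  set D : ℝ → ℝ := fun t => ε⁻¹ * φ t + g' t with hD
  have hfd : ∀ t ∈ Icc (0:ℝ) 1, HasDerivWithinAt f (D t) (Icc 0 1) t := by
    intro t ht
    have h1 : HasDerivWithinAt (fun u => x + ε⁻¹ * F u + g u) (0 + ε⁻¹ * φ t + g' t)
        (Icc 0 1) t :=
      (((hasDerivWithinAt_const t _ x).add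
        (((hFd t).hasDerivWithinAt).const_mul ε⁻¹)).add (hg' t ht))
    have h2 := h1.congr (fun y hy => hf2 y hy) (hf2 t ht)
    simpa [hD] using h2
  set G : ℝ → ℝ := fun t => ∫ s in (0:ℝ)..t, Real.exp (-s) * (gtil s)^2 with hG
  have hGic : Continuous (fun s => Real.exp (-s) * (gtil s)^2) :=
    (Real.continuous_exp.comp continuous_neg).mul (hgtilc.pow 2)
  have hGd : ∀ t, HasDerivAt G (Real.exp (-t) * (gtil t)^2) t := fun t =>
    (hGic.integral_hasStrictDerivAt 0 t).hasDerivAt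
  have hGcont : Continuous G := continuous_iff_continuousAt.mpr
    fun t => (hGd t).continuousAt
  set H : ℝ → ℝ := fun t => Real.exp (-t) * (f t)^2 - G t with hH
  set H' : ℝ → ℝ := fun t =>
    (-Real.exp (-t)) * (f t)^2 + Real.exp (-t) * (2 * f t * D t)
      - Real.exp (-t) * (gtil t)^2 with hH'
  have hHd : ∀ t ∈ Icc (0:ℝ) 1, HasDerivWithinAt H (H' t) (Icc 0 1) t := by
    intro t ht
    have he : HasDerivWithinAt (fun u => Real.exp (-u)) (-Real.exp (-t)) (Icc 0 1) t := by
      simpa [Function.comp_def] using ((Real.hasDerivAt_exp (-t)).comp t (hasDerivAt_neg t)).hasDerivWithinAt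
    have hsq : HasDerivWithinAt (fun u => (f u)^2) (2 * f t * D t) (Icc 0 1) t := by
      have := (hfd t ht).pow 2
      simpa [mul_comm, mul_assoc, mul_left_comm, Pi.pow_def] using this
    have := (he.mul hsq).sub (hGd t).hasDerivWithinAt
    simpa [hH, hH', mul_comm, mul_assoc, mul_left_comm, Pi.mul_def, Pi.sub_def] using this
  have hHcont : ContinuousOn H (Icc 0 1) :=
    (((Real.continuous_exp.comp continuous_neg).continuousOn).mul (hfc.pow 2)).sub
      hGcont.continuousOn
  -- H' ≤ 0 on interior
  have hH'le : ∀ t ∈ interior (Icc (0:ℝ) 1), H' t ≤ 0 := by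
    intro t ht
    rw [interior_Icc] at ht
    have ht1 : t ∈ Icc (0:ℝ) 1 := ⟨le_of_lt ht.1, le_of_lt ht.2⟩
    have hphit : φ t = max (-(f t)) 0 := by simp [hφ, hftil, hceq t ht1]
    have hgt : gtil t = g' t := by simp [hgtil, hceq t ht1]
    have hfm : f t * max (-(f t)) 0 ≤ 0 := by
      rcases le_total (f t) 0 with h | h
      · rw [max_eq_left (by linarith)]; nlinarith
      · rw [max_eq_right (by linarith)]; simp
    have hεi : (0:ℝ) < ε⁻¹ := inv_pos.mpr hε
    have hexp : (0:ℝ) < Real.exp (-t) := Real.exp_pos _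
    have key : 2 * f t * D t ≤ (f t)^2 + (g' t)^2 := by
      rw [hD]
      simp only [hphit]
      nlinarith [sq_nonneg (f t - g' t), mul_nonneg hεi.le (neg_nonneg.mpr hfm)]
    simp only [hH', hgt]
    nlinarith [mul_le_mul_of_nonneg_left key hexp.le]
  have hanti : AntitoneOn H (Icc (0:ℝ) 1) :=
    antitoneOn_of_hasDerivWithinAt_nonpos (convex_Icc 0 1) hHcont
      (fun t ht => ((hHd t (interior_subset ht)).mono interior_subset)) hH'le
  -- conclude
  intro t ht
  have h0 : (0:ℝ) ∈ Icc (0:ℝ) 1 := ⟨le_rfl, zero_le_one⟩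
  have hf0 : f 0 = x := by
    have := hf 0 h0
    simpa [hg0] using this
  have hH0 : H 0 = x^2 := by simp [hH, hG, hf0]
  have hle : H t ≤ x^2 := hH0 ▸ hanti h0 ht ht.1
  have hGle : G t ≤ ∫ s in (0:ℝ)..t, (g' s)^2 := by
    have heq : (∫ s in (0:ℝ)..t, (g' s)^2) = ∫ s in (0:ℝ)..t, (gtil s)^2 := by
      apply intervalIntegral.integral_congr
      intro s hs
      rw [uIcc_of_le ht.1] at hs
      simp [hgtil, hceq s (hsub t ht hs)]
    rw [heq, hG]
    apply intervalIntegral.integral_mono_on ht.1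
    · exact (hGic.intervalIntegrable 0 t)
    · exact ((hgtilc.pow 2).intervalIntegrable 0 t)
    · intro s hs
      have : Real.exp (-s) ≤ 1 := by
        rw [Real.exp_le_one_iff]
        linarith [hs.1]
      nlinarith [sq_nonneg (gtil s), (Real.exp_pos (-s)).le]
  have hexp : (0:ℝ) < Real.exp t := Real.exp_pos _
  have h1 : Real.exp (-t) * (f t)^2 ≤ x^2 + ∫ s in (0:ℝ)..t, (g' s)^2 := by
    have : Real.exp (-t) * (f t)^2 - G t ≤ x^2 := hle
    linarith
  have h2 : (f t)^2 = Real.exp t * (Real.exp (-t) * (f t)^2) := by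
    rw [← mul_assoc, ← Real.exp_add]
    simp
  rw [h2, mul_comm ((x:ℝ)^2 + _) (Real.exp t)]
  exact mul_le_mul_of_nonneg_left h1 hexp.le
end

section
/- Let g ∈ C¹([0,1]) with g(0) = 0, x ≥ 0, ε > 0, and let f^ε solve f^ε(t) = x + (1/ε)∫₀ᵗ (f^ε(s))⁻ ds + g(t). Then |d/dt f^ε(t)| ≤ 2·sup_{s∈[0,1]}|g'(s)| for all t ∈ [0,1]. -/
open Set intervalIntegral Topology Filter

/-- Uniform derivative bound for the penalized ODE: if
`f^ε(t) = x + ε⁻¹∫₀ᵗ (f^ε(s))⁻ ds + g(t)` with `g ∈ C¹([0,1])`, then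
`|d/dt f^ε(t)| ≤ 2 sup_{[0,1]} |g'|` on `[0,1]`. -/
theorem penalized_ODE_derivative_bound (g g' : ℝ → ℝ) (x ε : ℝ)
    (hx : 0 ≤ x) (hε : 0 < ε) (hg0 : g 0 = 0)
    (hg' : ∀ t ∈ Icc (0 : ℝ) 1, HasDerivWithinAt g (g' t) (Icc 0 1) t)
    (hg'c : ContinuousOn g' (Icc 0 1))
    (f : ℝ → ℝ) (hfc : ContinuousOn f (Icc 0 1))
    (hf : ∀ t ∈ Icc (0 : ℝ) 1,
      f t = x + ε⁻¹ * (∫ s in (0 : ℝ)..t, max (-(f s)) 0) + g t) :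
    ∀ t ∈ Icc (0 : ℝ) 1,
      |derivWithin f (Icc 0 1) t| ≤ 2 * sSup ((fun s => |g' s|) '' Icc 0 1) := by
  set M := sSup ((fun s => |g' s|) '' Icc 0 1) with hMdef
  have habs : ContinuousOn (fun s => |g' s|) (Icc (0:ℝ) 1) := hg'c.abs
  have hbdd : BddAbove ((fun s => |g' s|) '' Icc (0:ℝ) 1) :=
    (isCompact_Icc.image_of_continuousOn habs).bddAbove
  have hM : ∀ t ∈ Icc (0:ℝ) 1, |g' t| ≤ M := fun t ht =>
    le_csSup hbdd (mem_image_of_mem _ ht)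
  have hM0 : 0 ≤ M := le_trans (abs_nonneg _) (hM 0 (by norm_num))
  -- continuity of the integrand
  have hcont : ContinuousOn (fun s => max (-(f s)) 0) (Icc (0:ℝ) 1) :=
    fun s hs => ((hfc s hs).neg).max continuousWithinAt_const
  -- derivative of f within Icc 0 1
  have hfd : ∀ t ∈ Icc (0:ℝ) 1,
      HasDerivWithinAt f (ε⁻¹ * max (-(f t)) 0 + g' t) (Icc 0 1) t := by
    intro t ht
    haveI : Fact (t ∈ Icc (0:ℝ) 1) := ⟨ht⟩
    have hint : IntervalIntegrable (fun s => max (-(f s)) 0) MeasureTheory.volume 0 t := by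
      apply ContinuousOn.intervalIntegrable
      apply hcont.mono
      rw [uIcc_of_le ht.1]
      exact Icc_subset_Icc le_rfl ht.2
    have hmeas : StronglyMeasurableAtFilter (fun s => max (-(f s)) 0)
        (𝓝[Icc (0:ℝ) 1] t) MeasureTheory.volume :=
      hcont.stronglyMeasurableAtFilter_nhdsWithin measurableSet_Icc t
    have hF : HasDerivWithinAt (fun u => ∫ s in (0:ℝ)..u, max (-(f s)) 0)
        (max (-(f t)) 0) (Icc 0 1) t :=
      intervalIntegral.integral_hasDerivWithinAt_right hint hmeas (hcont t ht)
    have : HasDerivWithinAt (fun u => x + ε⁻¹ * (∫ s in (0:ℝ)..u, max (-(f s)) 0) + g u)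
        (ε⁻¹ * max (-(f t)) 0 + g' t) (Icc 0 1) t :=
      (((hF.const_mul ε⁻¹).const_add x).add (hg' t ht))
    exact this.congr (fun s hs => hf s hs) (hf t ht)
  -- f 0 = x
  have hf0 : f 0 = x := by
    have := hf 0 (by norm_num)
    simpa [hg0] using this
  -- lower bound : f t ≥ -(ε*M)
  have hlow : ∀ t ∈ Icc (0:ℝ) 1, -(ε*M) ≤ f t := by
    intro t ht
    by_contra hcon
    push_neg at hcon
    have ht0 : 0 < t := by
      rcases lt_or_eq_of_le ht.1 with h | h
      · exact h
      · exfalso; rw [← h, hf0] at hcon; nlinarith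
    -- the set of good points
    set S : Set ℝ := Icc 0 t ∩ f ⁻¹' (Ici (-(ε*M))) with hSdef
    have hsub : Icc 0 t ⊆ Icc (0:ℝ) 1 := Icc_subset_Icc le_rfl ht.2
    have hSne : S.Nonempty := ⟨0, ⟨le_rfl, ht0.le⟩, by simp only [mem_preimage, mem_Ici, hf0]; nlinarith⟩
    have hScl : IsClosed S :=
      (hfc.mono hsub).preimage_isClosed_of_isClosed isClosed_Icc isClosed_Ici
    have hScpt : IsCompact S := isCompact_Icc.of_isClosed_subset hScl inter_subset_left
    set s₀ := sSup S with hs0def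
    have hs₀S : s₀ ∈ S := hScpt.sSup_mem hSne
    have hs₀I : s₀ ∈ Icc (0:ℝ) t := hs₀S.1
    have hs₀t : s₀ < t := by
      rcases lt_or_eq_of_le hs₀I.2 with h | h
      · exact h
      · exfalso
        have := hs₀S.2
        rw [mem_preimage, mem_Ici, h] at this
        linarith
    -- on (s₀, t], f < -(ε*M)
    have hneg : ∀ s, s₀ < s → s ≤ t → f s < -(ε*M) := by
      intro s hs1 hs2
      by_contra hcc
      push_neg at hcc
      have : s ∈ S := ⟨⟨le_trans hs₀I.1 hs1.le, hs2⟩, hcc⟩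
      exact absurd (le_csSup hScpt.bddAbove this) (not_le.mpr hs1)
    -- f is monotone on [s₀, t]
    have hmono : MonotoneOn f (Icc s₀ t) := by
      apply monotoneOn_of_deriv_nonneg (convex_Icc s₀ t)
          (hfc.mono (Icc_subset_Icc hs₀I.1 ht.2))
      · intro s hs
        rw [interior_Icc] at hs
        have hsI : s ∈ Icc (0:ℝ) 1 :=
          ⟨le_trans hs₀I.1 hs.1.le, le_trans hs.2.le ht.2⟩
        have hd := (hfd s hsI).hasDerivAt
          (Icc_mem_nhds (lt_of_le_of_lt hs₀I.1 hs.1) (lt_of_lt_of_le hs.2 ht.2))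
        exact hd.differentiableAt.differentiableWithinAt
      · intro s hs
        rw [interior_Icc] at hs
        have hsI : s ∈ Icc (0:ℝ) 1 :=
          ⟨le_trans hs₀I.1 hs.1.le, le_trans hs.2.le ht.2⟩
        have hd := (hfd s hsI).hasDerivAt
          (Icc_mem_nhds (lt_of_le_of_lt hs₀I.1 hs.1) (lt_of_lt_of_le hs.2 ht.2))
        rw [hd.deriv]
        have hfs := hneg s hs.1 hs.2.le
        have h1 : ε * M ≤ max (-(f s)) 0 := le_max_of_le_left (by linarith)
        have h2 : M ≤ ε⁻¹ * max (-(f s)) 0 := by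
          rw [le_inv_mul_iff₀ hε]; linarith [mul_comm ε M]
        have := hM s hsI
        have := abs_le.mp this
        linarith [this.1]
    have hft : f s₀ ≤ f t :=
      hmono ⟨le_rfl, hs₀t.le⟩ ⟨hs₀t.le, le_rfl⟩ hs₀t.le
    have := hs₀S.2
    rw [mem_preimage, mem_Ici] at this
    linarith
  -- conclusion
  intro t ht
  have hd := hfd t ht
  rw [hd.derivWithin ((uniqueDiffOn_Icc zero_lt_one) t ht)]
  have h1 : max (-(f t)) 0 ≤ ε * M := by
    have := hlow t ht
    apply max_le (by linarith) (by nlinarith)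
  have h2 : ε⁻¹ * max (-(f t)) 0 ≤ M := by
    rw [inv_mul_le_iff₀ hε]; linarith [mul_comm ε M]
  have h3 : 0 ≤ ε⁻¹ * max (-(f t)) 0 :=
    mul_nonneg (inv_nonneg.mpr hε.le) (le_max_right _ _)
  calc |ε⁻¹ * max (-(f t)) 0 + g' t| ≤ |ε⁻¹ * max (-(f t)) 0| + |g' t| := abs_add_le _ _
    _ ≤ M + M := add_le_add (by rw [abs_of_nonneg h3]; exact h2) (hM t ht)
    _ = 2 * M := by ring
end

section
/- Comparison for the penalized ODE: for 0 < ε₁ ≤ ε₂, g ∈ C¹([0,1]) with g(0)=0 and x ≥ 0, let f^{ε_i} solve f^{ε_i}(t) = x + (1/ε_i)∫₀ᵗ (f^{ε_i}(s))⁻ ds + g(t). Then f^{ε₂}(t) ≤ f^{ε₁}(t) for all t ∈ [0,1]; i.e., the family {f^ε} is pointwise nondecreasing as ε decreases to 0. -/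
open Set intervalIntegral

/-- Comparison for the penalized ODE: for `0 < ε₁ ≤ ε₂` the corresponding solutions
satisfy `f^{ε₂} ≤ f^{ε₁}` pointwise on `[0,1]`. -/
theorem penalized_ODE_comparison (g g' : ℝ → ℝ) (x ε₁ ε₂ : ℝ)
    (hx : 0 ≤ x) (hε₁ : 0 < ε₁) (hε : ε₁ ≤ ε₂) (hg0 : g 0 = 0)
    (hg' : ∀ t ∈ Icc (0 : ℝ) 1, HasDerivWithinAt g (g' t) (Icc 0 1) t)
    (hg'c : ContinuousOn g' (Icc 0 1))
    (f₁ f₂ : ℝ → ℝ)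
    (hf₁c : ContinuousOn f₁ (Icc 0 1)) (hf₂c : ContinuousOn f₂ (Icc 0 1))
    (hf₁ : ∀ t ∈ Icc (0 : ℝ) 1,
      f₁ t = x + ε₁⁻¹ * (∫ s in (0 : ℝ)..t, max (-(f₁ s)) 0) + g t)
    (hf₂ : ∀ t ∈ Icc (0 : ℝ) 1,
      f₂ t = x + ε₂⁻¹ * (∫ s in (0 : ℝ)..t, max (-(f₂ s)) 0) + g t) :
    ∀ t ∈ Icc (0 : ℝ) 1, f₂ t ≤ f₁ t := by
  have hε₂ : 0 < ε₂ := lt_of_lt_of_le hε₁ hε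
  set h : ℝ → ℝ := fun s => f₂ s - f₁ s with hh
  have hhc : ContinuousOn h (Icc 0 1) := hf₂c.sub hf₁c
  have h0mem : (0:ℝ) ∈ Icc (0:ℝ) 1 := by norm_num
  have h0 : h 0 = 0 := by
    have e1 := hf₁ 0 h0mem
    have e2 := hf₂ 0 h0mem
    simp [intervalIntegral.integral_same, hg0] at e1 e2
    simp [hh, e1, e2]
  intro t ht
  by_contra hlt
  push_neg at hlt
  have hht : 0 < h t := by simp only [hh]; linarith
  set S := Icc (0:ℝ) t ∩ h ⁻¹' (Iic 0) with hS
  have hIcc_sub : Icc (0:ℝ) t ⊆ Icc (0:ℝ) 1 := Icc_subset_Icc le_rfl ht.2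
  have hScl : IsClosed S :=
    (hhc.mono hIcc_sub).preimage_isClosed_of_isClosed isClosed_Icc isClosed_Iic
  have hSne : S.Nonempty := ⟨0, ⟨le_rfl, ht.1⟩, by simp [h0]⟩
  have hSbdd : BddAbove S := ⟨t, fun s hs => hs.1.2⟩
  set u := sSup S with hu
  have huS : u ∈ S := hScl.csSup_mem hSne hSbdd
  have hu0 : 0 ≤ u := huS.1.1
  have hut : u ≤ t := huS.1.2
  have hu01 : u ∈ Icc (0:ℝ) 1 := hIcc_sub huS.1
  have hu_lt : u < t := by
    rcases lt_or_eq_of_le hut with h' | h'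
    · exact h'
    · exfalso; have := huS.2; rw [h'] at this; exact absurd this (by simpa using hht.not_ge)
  -- points in (u, t] have h > 0
  have hpos : ∀ s ∈ Ioc u t, 0 < h s := by
    intro s hs
    by_contra hc
    push_neg at hc
    have hsS : s ∈ S := ⟨⟨hu0.trans hs.1.le, hs.2⟩, hc⟩
    exact absurd (le_csSup hSbdd hsS) (not_le_of_gt hs.1)
  -- h u = 0
  have hu_ge : 0 ≤ h u := by
    have hne : (nhdsWithin u (Ioc u t)).NeBot := by
      rw [← mem_closure_iff_nhdsWithin_neBot, closure_Ioc hu_lt.ne]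
      exact ⟨le_rfl, hu_lt.le⟩
    have htend : Filter.Tendsto h (nhdsWithin u (Ioc u t)) (nhds (h u)) :=
      ((hhc u hu01).mono (fun s hs => hIcc_sub ⟨hu0.trans hs.1.le, hs.2⟩)).tendsto
    exact ge_of_tendsto htend (Filter.eventually_of_mem self_mem_nhdsWithin
      fun s hs => (hpos s hs).le)
  have hu_eq : h u = 0 := le_antisymm huS.2 hu_ge
  -- h ≥ 0 on [u, t]
  have hnonneg : ∀ s ∈ Icc u t, 0 ≤ h s := by
    intro s hs
    rcases eq_or_lt_of_le hs.1 with h' | h'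
    · rw [← h']; exact hu_ge
    · exact (hpos s ⟨h', hs.2⟩).le
  -- integrability
  have huIcc : uIcc (0:ℝ) u ⊆ Icc 0 1 := by
    rw [uIcc_of_le hu0]; exact Icc_subset_Icc le_rfl hu01.2
  have htIcc : uIcc (0:ℝ) t ⊆ Icc 0 1 := by
    rw [uIcc_of_le ht.1]; exact Icc_subset_Icc le_rfl ht.2
  have hi₁ : ∀ v : ℝ, v ∈ Icc (0:ℝ) 1 → IntervalIntegrable (fun s => max (-(f₁ s)) 0) MeasureTheory.volume 0 v := by
    intro v hv
    exact (((hf₁c.mono (by rw [uIcc_of_le hv.1]; exact Icc_subset_Icc le_rfl hv.2)).neg).sup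
      continuousOn_const).intervalIntegrable
  have hi₂ : ∀ v : ℝ, v ∈ Icc (0:ℝ) 1 → IntervalIntegrable (fun s => max (-(f₂ s)) 0) MeasureTheory.volume 0 v := by
    intro v hv
    exact (((hf₂c.mono (by rw [uIcc_of_le hv.1]; exact Icc_subset_Icc le_rfl hv.2)).neg).sup
      continuousOn_const).intervalIntegrable
  -- the key identity
  have key : h t - h u = ε₂⁻¹ * (∫ s in u..t, max (-(f₂ s)) 0)
      - ε₁⁻¹ * (∫ s in u..t, max (-(f₁ s)) 0) := by
    have e1t := hf₁ t ht
    have e1u := hf₁ u hu01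
    have e2t := hf₂ t ht
    have e2u := hf₂ u hu01
    have d1 : (∫ s in (0:ℝ)..t, max (-(f₁ s)) 0) - (∫ s in (0:ℝ)..u, max (-(f₁ s)) 0)
        = ∫ s in u..t, max (-(f₁ s)) 0 :=
      intervalIntegral.integral_interval_sub_left (hi₁ t ht) (hi₁ u hu01)
    have d2 : (∫ s in (0:ℝ)..t, max (-(f₂ s)) 0) - (∫ s in (0:ℝ)..u, max (-(f₂ s)) 0)
        = ∫ s in u..t, max (-(f₂ s)) 0 :=
      intervalIntegral.integral_interval_sub_left (hi₂ t ht) (hi₂ u hu01)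
    simp only [hh]
    rw [e1t, e1u, e2t, e2u, ← d1, ← d2]
    ring
  -- integral comparison on [u,t]
  have hcomp : ε₂⁻¹ * (∫ s in u..t, max (-(f₂ s)) 0)
      ≤ ε₁⁻¹ * (∫ s in u..t, max (-(f₁ s)) 0) := by
    rw [← intervalIntegral.integral_const_mul, ← intervalIntegral.integral_const_mul]
    apply intervalIntegral.integral_mono_on hu_lt.le
    · refine IntervalIntegrable.const_mul ?_ _
      refine ContinuousOn.intervalIntegrable (ContinuousOn.sup ((hf₂c.mono ?_).neg) continuousOn_const)
      rw [uIcc_of_le hu_lt.le]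
      exact fun s hs => hIcc_sub ⟨hu0.trans hs.1, hs.2⟩
    · refine IntervalIntegrable.const_mul ?_ _
      refine ContinuousOn.intervalIntegrable (ContinuousOn.sup ((hf₁c.mono ?_).neg) continuousOn_const)
      rw [uIcc_of_le hu_lt.le]
      exact fun s hs => hIcc_sub ⟨hu0.trans hs.1, hs.2⟩
    · intro s hs
      have h12 : f₁ s ≤ f₂ s := by have := hnonneg s hs; simp only [hh] at this; linarith
      have hmax : max (-(f₂ s)) 0 ≤ max (-(f₁ s)) 0 :=
        max_le_max (neg_le_neg h12) le_rfl
      have hinv : ε₂⁻¹ ≤ ε₁⁻¹ := inv_anti₀ hε₁ hε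
      have hnn : (0:ℝ) ≤ max (-(f₂ s)) 0 := le_max_right _ _
      calc ε₂⁻¹ * max (-(f₂ s)) 0 ≤ ε₁⁻¹ * max (-(f₂ s)) 0 :=
            mul_le_mul_of_nonneg_right hinv hnn
        _ ≤ ε₁⁻¹ * max (-(f₁ s)) 0 :=
            mul_le_mul_of_nonneg_left hmax (inv_nonneg.mpr hε₁.le)
  have : h t ≤ 0 := by rw [hu_eq] at key; linarith
  linarith
end

section
/- Stability estimate for the penalized ODE: let g₁, g₂ ∈ C¹([0,1]) with gᵢ(0) = 0, x ≥ 0, ε > 0, and let fᵢ^ε solve fᵢ^ε(t) = x + (1/ε)∫₀ᵗ (fᵢ^ε(s))⁻ ds + gᵢ(t). Then sup_{t∈[0,1]} |f₁^ε(t) - f₂^ε(t)| ≤ 2·sup_{t∈[0,1]} |g₁(t) - g₂(t)|, uniformly in ε. -/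
open Set intervalIntegral
section PenalizedAux
open Filter

lemma hasDerivAt_posPart_sq (x : ℝ) :
    HasDerivAt (fun y : ℝ => (max y 0) ^ 2) (2 * max x 0) x := by
  rcases lt_trichotomy x 0 with hx | hx | hx
  · have hev : (fun y : ℝ => (max y 0) ^ 2) =ᶠ[nhds x] fun _ => (0 : ℝ) := by
      filter_upwards [eventually_lt_nhds hx] with y hy
      simp [max_eq_right hy.le]
    have : HasDerivAt (fun _ : ℝ => (0 : ℝ)) 0 x := hasDerivAt_const x 0
    have h := this.congr_of_eventuallyEq hev
    simpa [max_eq_right hx.le] using h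
  · subst hx
    rw [hasDerivAt_iff_tendsto_slope]
    simp only [max_self, mul_zero]
    apply squeeze_zero_norm (a := fun y => |y|)
    · intro y
      rcases le_or_gt y 0 with hy | hy
      · simp [slope_def_field, max_eq_right hy, abs_nonneg]
      · rw [slope_def_field, max_eq_left hy.le]
        have : (y ^ 2 - (max 0 0 : ℝ) ^ 2) / (y - 0) = y := by
          simp only [max_self, sub_zero]
          field_simp; ring
        rw [this]
        simp
    · have : Tendsto (fun y : ℝ => |y|) (nhds 0) (nhds 0) := by
        simpa using continuous_abs.tendsto (0 : ℝ)
      exact this.mono_left nhdsWithin_le_nhds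
  · have hev : (fun y : ℝ => (max y 0) ^ 2) =ᶠ[nhds x] fun y => y ^ 2 := by
      filter_upwards [eventually_gt_nhds hx] with y hy
      simp [max_eq_left hy.le]
    have : HasDerivAt (fun y : ℝ => y ^ 2) (2 * x) x := by
      simpa using hasDerivAt_pow 2 x
    have h := this.congr_of_eventuallyEq hev
    simpa [max_eq_left hx.le] using h

lemma penalized_one_side (g₁ g₂ f₁ f₂ : ℝ → ℝ) (x ε : ℝ) (hε : 0 < ε)
    (hg₁c : ContinuousOn g₁ (Icc 0 1)) (hg₂c : ContinuousOn g₂ (Icc 0 1))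
    (hf₁c : ContinuousOn f₁ (Icc 0 1)) (hf₂c : ContinuousOn f₂ (Icc 0 1))
    (hf₁ : ∀ t ∈ Icc (0 : ℝ) 1,
      f₁ t = x + ε⁻¹ * (∫ s in (0 : ℝ)..t, max (-(f₁ s)) 0) + g₁ t)
    (hf₂ : ∀ t ∈ Icc (0 : ℝ) 1,
      f₂ t = x + ε⁻¹ * (∫ s in (0 : ℝ)..t, max (-(f₂ s)) 0) + g₂ t) :
    ∀ t ∈ Icc (0 : ℝ) 1,
      f₁ t - f₂ t - (g₁ t - g₂ t) ≤ sSup ((fun s => |g₁ s - g₂ s|) '' Icc 0 1) := by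
  set K := sSup ((fun s => |g₁ s - g₂ s|) '' Icc 0 1) with hKdef
  have hbdd : BddAbove ((fun s => |g₁ s - g₂ s|) '' Icc 0 1) :=
    (isCompact_Icc.image_of_continuousOn ((hg₁c.sub hg₂c).abs)).bddAbove
  have hK : ∀ s ∈ Icc (0 : ℝ) 1, |g₁ s - g₂ s| ≤ K := fun s hs =>
    le_csSup hbdd ⟨s, hs, rfl⟩
  have hK0 : (0 : ℝ) ≤ K :=
    le_trans (abs_nonneg _) (hK 0 ⟨le_refl 0, zero_le_one⟩)
  -- projection onto [0,1]
  set p : ℝ → ℝ := fun s => max 0 (min 1 s) with hpdef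
  have hpc : Continuous p := continuous_const.max (continuous_const.min continuous_id)
  have hpmem : ∀ s, p s ∈ Icc (0 : ℝ) 1 :=
    fun s => ⟨le_max_left _ _, max_le zero_le_one (min_le_left _ _)⟩
  have hpeq : ∀ s ∈ Icc (0 : ℝ) 1, p s = s := by
    intro s hs
    simp [hpdef, min_eq_right hs.2, max_eq_right hs.1]
  set φ : ℝ → ℝ := fun s => max (-(f₁ (p s))) 0 - max (-(f₂ (p s))) 0 with hφdef
  have hf1p : Continuous fun s => f₁ (p s) := hf₁c.comp_continuous hpc hpmem
  have hf2p : Continuous fun s => f₂ (p s) := hf₂c.comp_continuous hpc hpmem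
  have hφc : Continuous φ :=
    ((hf1p.neg.max continuous_const)).sub ((hf2p.neg.max continuous_const))
  set U : ℝ → ℝ := fun t => ε⁻¹ * ∫ s in (0 : ℝ)..t, φ s with hUdef
  have hU : ∀ t, HasDerivAt U (ε⁻¹ * φ t) t := fun t =>
    ((hφc.integral_hasStrictDerivAt 0 t).hasDerivAt).const_mul ε⁻¹
  have hUc : Continuous U := by
    rw [continuous_iff_continuousAt]; exact fun t => (hU t).continuousAt
  have hUeq : ∀ t ∈ Icc (0 : ℝ) 1, U t = f₁ t - f₂ t - (g₁ t - g₂ t) := by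
    intro t ht
    have hsub : ∀ s ∈ Icc (0 : ℝ) t, s ∈ Icc (0 : ℝ) 1 :=
      fun s hs => ⟨hs.1, hs.2.trans ht.2⟩
    have h1 : (∫ s in (0 : ℝ)..t, max (-(f₁ (p s))) 0) =
        ∫ s in (0 : ℝ)..t, max (-(f₁ s)) 0 := by
      apply intervalIntegral.integral_congr
      intro s hs
      rw [uIcc_of_le ht.1] at hs
      simp only []
      rw [hpeq s (hsub s hs)]
    have h2 : (∫ s in (0 : ℝ)..t, max (-(f₂ (p s))) 0) =
        ∫ s in (0 : ℝ)..t, max (-(f₂ s)) 0 := by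
      apply intervalIntegral.integral_congr
      intro s hs
      rw [uIcc_of_le ht.1] at hs
      simp only []
      rw [hpeq s (hsub s hs)]
    have hint : (∫ s in (0 : ℝ)..t, φ s) =
        (∫ s in (0 : ℝ)..t, max (-(f₁ s)) 0) - ∫ s in (0 : ℝ)..t, max (-(f₂ s)) 0 := by
      rw [hφdef]
      rw [intervalIntegral.integral_sub (f := fun s => max (-(f₁ (p s))) 0)
        (g := fun s => max (-(f₂ (p s))) 0)
        ((hf1p.neg.max continuous_const).intervalIntegrable 0 t)
        ((hf2p.neg.max continuous_const).intervalIntegrable 0 t), h1, h2]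
    have e1 := hf₁ t ht
    have e2 := hf₂ t ht
    rw [hUdef]
    simp only [hint, mul_sub]
    linarith
  set ψ : ℝ → ℝ := fun t => (max (U t - K) 0) ^ 2 with hψdef
  have hψd : ∀ t, HasDerivAt ψ (2 * max (U t - K) 0 * (ε⁻¹ * φ t)) t := by
    intro t
    have := (hasDerivAt_posPart_sq (U t - K)).comp t ((hU t).sub_const K)
    simpa [Function.comp_def] using this
  have hψc : Continuous ψ := by
    rw [continuous_iff_continuousAt]; exact fun t => (hψd t).continuousAt
  have hψ' : ∀ t ∈ interior (Icc (0 : ℝ) 1),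
      2 * max (U t - K) 0 * (ε⁻¹ * φ t) ≤ 0 := by
    intro t ht
    rw [interior_Icc] at ht
    have htIcc : t ∈ Icc (0 : ℝ) 1 := ⟨ht.1.le, ht.2.le⟩
    by_cases hUK : U t ≤ K
    · rw [max_eq_right (sub_nonpos.mpr hUK)]
      simp
    · push_neg at hUK
      have habs := hK t htIcc
      have hU' := hUeq t htIcc
      have hf12 : f₂ t ≤ f₁ t := by
        have := abs_le.mp habs
        nlinarith
      have hφt : φ t ≤ 0 := by
        rw [hφdef]
        simp only [hpeq t htIcc]
        have := max_le_max (neg_le_neg hf12) (le_refl (0 : ℝ))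
        linarith
      exact mul_nonpos_of_nonneg_of_nonpos
        (by positivity)
        (mul_nonpos_of_nonneg_of_nonpos (inv_nonneg.mpr hε.le) hφt)
  have hanti : AntitoneOn ψ (Icc 0 1) := by
    apply antitoneOn_of_hasDerivWithinAt_nonpos (convex_Icc 0 1) hψc.continuousOn
      (f' := fun t => 2 * max (U t - K) 0 * (ε⁻¹ * φ t))
      (fun t _ => (hψd t).hasDerivWithinAt) hψ'
  intro t ht
  have hψ0 : ψ 0 = 0 := by
    have hU0 : U 0 = 0 := by simp [hUdef]
    rw [hψdef]
    simp only [hU0, zero_sub]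
    rw [max_eq_right (by linarith)]
    simp
  have h1 : ψ t ≤ 0 := by
    have := hanti ⟨le_refl 0, zero_le_one⟩ ht ht.1
    linarith [hψ0 ▸ this]
  have h2 : (0 : ℝ) ≤ ψ t := sq_nonneg _
  have h3 : max (U t - K) 0 = 0 := by
    have : ψ t = 0 := le_antisymm h1 h2
    rw [hψdef] at this
    exact pow_eq_zero_iff (two_ne_zero) |>.mp this
  have h4 : U t - K ≤ 0 := by
    by_contra h
    push_neg at h
    rw [max_eq_left h.le] at h3
    linarith
  rw [hUeq t ht] at h4
  linarith

end PenalizedAux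

/-- Stability of the penalized ODE in the driver, uniformly in `ε`:
`sup_{[0,1]} |f₁^ε - f₂^ε| ≤ 2 sup_{[0,1]} |g₁ - g₂|`. -/
theorem penalized_ODE_stability (g₁ g₁' g₂ g₂' : ℝ → ℝ) (x ε : ℝ)
    (hx : 0 ≤ x) (hε : 0 < ε) (hg₁0 : g₁ 0 = 0) (hg₂0 : g₂ 0 = 0)
    (hg₁' : ∀ t ∈ Icc (0 : ℝ) 1, HasDerivWithinAt g₁ (g₁' t) (Icc 0 1) t)
    (hg₁'c : ContinuousOn g₁' (Icc 0 1))
    (hg₂' : ∀ t ∈ Icc (0 : ℝ) 1, HasDerivWithinAt g₂ (g₂' t) (Icc 0 1) t)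
    (hg₂'c : ContinuousOn g₂' (Icc 0 1))
    (f₁ f₂ : ℝ → ℝ)
    (hf₁c : ContinuousOn f₁ (Icc 0 1)) (hf₂c : ContinuousOn f₂ (Icc 0 1))
    (hf₁ : ∀ t ∈ Icc (0 : ℝ) 1,
      f₁ t = x + ε⁻¹ * (∫ s in (0 : ℝ)..t, max (-(f₁ s)) 0) + g₁ t)
    (hf₂ : ∀ t ∈ Icc (0 : ℝ) 1,
      f₂ t = x + ε⁻¹ * (∫ s in (0 : ℝ)..t, max (-(f₂ s)) 0) + g₂ t) :
    ∀ t ∈ Icc (0 : ℝ) 1,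
      |f₁ t - f₂ t| ≤ 2 * sSup ((fun s => |g₁ s - g₂ s|) '' Icc 0 1) := by

  intro t ht
  have hg₁c : ContinuousOn g₁ (Icc 0 1) :=
    fun s hs => (hg₁' s hs).continuousWithinAt
  have hg₂c : ContinuousOn g₂ (Icc 0 1) :=
    fun s hs => (hg₂' s hs).continuousWithinAt
  have h1 := penalized_one_side g₁ g₂ f₁ f₂ x ε hε hg₁c hg₂c hf₁c hf₂c hf₁ hf₂ t ht
  have h2 := penalized_one_side g₂ g₁ f₂ f₁ x ε hε hg₂c hg₁c hf₂c hf₁c hf₂ hf₁ t ht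
  have himg : (fun s => |g₂ s - g₁ s|) = fun s => |g₁ s - g₂ s| := by
    funext s; exact abs_sub_comm _ _
  rw [himg] at h2
  have hbdd : BddAbove ((fun s => |g₁ s - g₂ s|) '' Icc 0 1) :=
    (isCompact_Icc.image_of_continuousOn ((hg₁c.sub hg₂c).abs)).bddAbove
  have hKt : |g₁ t - g₂ t| ≤ sSup ((fun s => |g₁ s - g₂ s|) '' Icc 0 1) :=
    le_csSup hbdd ⟨t, ht, rfl⟩
  have habs := abs_le.mp (le_refl |g₁ t - g₂ t|) |>.1
  rw [abs_le]
  constructor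
  · have := neg_abs_le (g₁ t - g₂ t)
    linarith
  · have := le_abs_self (g₁ t - g₂ t)
    linarith
end

section
/- Let g ∈ C¹([0,1]) with g(0)=0 and x ≥ 0, and for ε > 0 let f^ε solve the penalized ODE f^ε(t) = x + ε⁻¹∫₀ᵗ (f^ε(s))⁻ ds + g(t). If f(t) := lim_{ε→0} f^ε(t) exists pointwise and is finite on [0,1], then f(t) ≥ 0 for all t ∈ [0,1]. -/
open Set Filter intervalIntegral

/-- If the solutions of the penalized ODEs converge pointwise (as `ε → 0⁺`) to a finite
limit `f` on `[0,1]`, then the limit is nonnegative. -/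
theorem penalized_ODE_limit_nonneg (g g' : ℝ → ℝ) (x : ℝ)
    (hx : 0 ≤ x) (hg0 : g 0 = 0)
    (hg' : ∀ t ∈ Icc (0 : ℝ) 1, HasDerivWithinAt g (g' t) (Icc 0 1) t)
    (hg'c : ContinuousOn g' (Icc 0 1))
    (F : ℝ → ℝ → ℝ)
    (hFc : ∀ ε : ℝ, 0 < ε → ContinuousOn (F ε) (Icc 0 1))
    (hF : ∀ ε : ℝ, 0 < ε → ∀ t ∈ Icc (0 : ℝ) 1,
      F ε t = x + ε⁻¹ * (∫ s in (0 : ℝ)..t, max (-(F ε s)) 0) + g t)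
    (f : ℝ → ℝ)
    (hlim : ∀ t ∈ Icc (0 : ℝ) 1,
      Tendsto (fun ε => F ε t) (nhdsWithin 0 (Ioi 0)) (nhds (f t))) :
    ∀ t ∈ Icc (0 : ℝ) 1, 0 ≤ f t := by
  -- bound on g'
  obtain ⟨C, hC⟩ := isCompact_Icc.exists_bound_of_continuousOn hg'c
  set M : ℝ := C + 1 with hM
  have hC0 : 0 ≤ C := le_trans (norm_nonneg _) (hC 0 ⟨le_refl _, zero_le_one⟩)
  have hM0 : 0 < M := by positivity
  have hlip : ∀ a ∈ Icc (0:ℝ) 1, ∀ b ∈ Icc (0:ℝ) 1, |g b - g a| ≤ M * |b - a| := by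
    intro a ha b hb
    have h1 := (convex_Icc (0:ℝ) 1).norm_image_sub_le_of_norm_hasDerivWithin_le
      hg' (fun t ht => le_trans (hC t ht) (le_refl C)) ha hb
    have h2 : |g b - g a| ≤ C * |b - a| := by simpa [Real.norm_eq_abs] using h1
    have h3 : C * |b - a| ≤ M * |b - a| :=
      mul_le_mul_of_nonneg_right (by rw [hM]; linarith) (abs_nonneg _)
    linarith
  -- key uniform lower bound
  have key : ∀ ε : ℝ, 0 < ε → ∀ t ∈ Icc (0:ℝ) 1, -(ε * M) ≤ F ε t := by
    intro ε hε
    by_contra hcon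
    push_neg at hcon
    obtain ⟨t₁, ht₁, ht₁lt⟩ := hcon
    have hF0 : F ε 0 = x := by
      have := hF ε hε 0 ⟨le_refl _, zero_le_one⟩
      simpa [hg0] using this
    set S : Set ℝ := Icc 0 t₁ ∩ (F ε) ⁻¹' (Ici (-(ε * M))) with hS
    have hSsub : S ⊆ Icc 0 t₁ := inter_subset_left
    have hS0 : (0:ℝ) ∈ S := by
      refine ⟨⟨le_refl _, ht₁.1⟩, ?_⟩
      simp only [mem_preimage, mem_Ici, hF0]
      nlinarith [mul_pos hε hM0]
    have hSne : S.Nonempty := ⟨0, hS0⟩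
    have hScl : IsClosed S := by
      apply ContinuousOn.preimage_isClosed_of_isClosed
        ((hFc ε hε).mono (Icc_subset_Icc le_rfl ht₁.2)) isClosed_Icc isClosed_Ici
    have hScomp : IsCompact S := isCompact_Icc.of_isClosed_subset hScl hSsub
    set t₀ : ℝ := sSup S with ht₀def
    have ht₀S : t₀ ∈ S := hScomp.sSup_mem hSne
    have ht₀I : t₀ ∈ Icc (0:ℝ) t₁ := hSsub ht₀S
    have ht₀1 : t₀ ∈ Icc (0:ℝ) 1 := ⟨ht₀I.1, le_trans ht₀I.2 ht₁.2⟩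
    have ht₀F : -(ε * M) ≤ F ε t₀ := ht₀S.2
    have ht₀lt : t₀ < t₁ := by
      rcases lt_or_eq_of_le ht₀I.2 with h | h
      · exact h
      · exfalso; rw [h] at ht₀F; linarith
    have hIoc : ∀ s ∈ Ioc t₀ t₁, F ε s < -(ε * M) := by
      intro s hs
      by_contra h
      push_neg at h
      have hsS : s ∈ S := ⟨⟨le_trans ht₀I.1 hs.1.le, hs.2⟩, h⟩
      have := le_csSup hScomp.bddAbove hsS
      exact absurd this (not_le.mpr hs.1)
    -- integrand continuity / integrability
    set h : ℝ → ℝ := fun s => max (-(F ε s)) 0 with hh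
    have hcont : ContinuousOn h (Icc 0 1) := ((hFc ε hε).neg).sup continuousOn_const
    have hi01 : IntervalIntegrable h MeasureTheory.volume 0 t₀ :=
      (hcont.mono (by rw [uIcc_of_le ht₀1.1]; exact Icc_subset_Icc le_rfl ht₀1.2)).intervalIntegrable
    have hi12 : IntervalIntegrable h MeasureTheory.volume t₀ t₁ :=
      (hcont.mono (by rw [uIcc_of_le ht₀lt.le]; exact Icc_subset_Icc ht₀1.1 ht₁.2)).intervalIntegrable
    have hadd : (∫ s in (0:ℝ)..t₀, h s) + (∫ s in t₀..t₁, h s) = ∫ s in (0:ℝ)..t₁, h s :=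
      integral_add_adjacent_intervals hi01 hi12
    -- lower bound on middle integral
    have hIbound : ε * M * (t₁ - t₀) ≤ ∫ s in t₀..t₁, h s := by
      rw [intervalIntegral.integral_of_le ht₀lt.le]
      have hint : MeasureTheory.IntegrableOn h (Ioc t₀ t₁) MeasureTheory.volume := by
        rw [intervalIntegrable_iff_integrableOn_Ioc_of_le ht₀lt.le] at hi12
        exact hi12
      have hconst : MeasureTheory.IntegrableOn (fun _ : ℝ => ε * M) (Ioc t₀ t₁)
          MeasureTheory.volume := MeasureTheory.integrableOn_const (by
        rw [Real.volume_Ioc]; exact ENNReal.ofReal_ne_top)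
      have hmono : ∀ s ∈ Ioc t₀ t₁, ε * M ≤ h s := by
        intro s hs
        have := hIoc s hs
        have h1 : ε * M ≤ -(F ε s) := by linarith
        exact le_trans h1 (le_max_left _ _)
      have := MeasureTheory.setIntegral_mono_on hconst hint measurableSet_Ioc hmono
      calc ε * M * (t₁ - t₀)
          = ∫ _ in Ioc t₀ t₁, ε * M := by
            rw [MeasureTheory.setIntegral_const, Real.volume_real_Ioc,
              max_eq_left (by linarith), smul_eq_mul]; ring
        _ ≤ _ := this
    -- the two equations
    have hEq0 : F ε t₀ = x + ε⁻¹ * (∫ s in (0:ℝ)..t₀, h s) + g t₀ := hF ε hε t₀ ht₀1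
    have hEq1 : F ε t₁ = x + ε⁻¹ * (∫ s in (0:ℝ)..t₁, h s) + g t₁ := hF ε hε t₁ ht₁
    have hg_bd : -(M * (t₁ - t₀)) ≤ g t₁ - g t₀ := by
      have h1 := hlip t₀ ht₀1 t₁ ht₁
      rw [abs_of_nonneg (by linarith : (0:ℝ) ≤ t₁ - t₀)] at h1
      have h2 := (abs_le.mp h1).1
      linarith
    have hinv : ε⁻¹ * (ε * M * (t₁ - t₀)) = M * (t₁ - t₀) := by
      rw [show ε * M * (t₁ - t₀) = ε * (M * (t₁ - t₀)) by ring, ← mul_assoc,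
        inv_mul_cancel₀ hε.ne', one_mul]
    have hinvI : ε⁻¹ * (ε * M * (t₁ - t₀)) ≤ ε⁻¹ * (∫ s in t₀..t₁, h s) :=
      mul_le_mul_of_nonneg_left hIbound (inv_nonneg.mpr hε.le)
    have hfin : M * (t₁ - t₀) ≤ ε⁻¹ * (∫ s in t₀..t₁, h s) := hinv ▸ hinvI
    have hdiff : F ε t₁ - F ε t₀ = ε⁻¹ * (∫ s in t₀..t₁, h s) + (g t₁ - g t₀) := by
      rw [hEq0, hEq1, ← hadd]; ring
    clear_value t₀ M
    generalize hI : (∫ s in t₀..t₁, h s) = I at hfin hdiff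
    linarith [hfin, hdiff, hg_bd, ht₀F, ht₁lt]
  -- pass to the limit
  intro t ht
  have h1 : Tendsto (fun ε : ℝ => -(ε * M)) (nhdsWithin 0 (Ioi 0)) (nhds 0) := by
    have : Tendsto (fun ε : ℝ => -(ε * M)) (nhds 0) (nhds (-(0 * M))) := by
      exact (tendsto_id.mul_const M).neg
    rw [zero_mul, neg_zero] at this
    exact this.mono_left nhdsWithin_le_nhds
  have hev : ∀ᶠ ε in nhdsWithin (0:ℝ) (Ioi 0), -(ε * M) ≤ F ε t := by
    filter_upwards [self_mem_nhdsWithin] with ε hε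
    exact key ε hε t ht
  exact le_of_tendsto_of_tendsto h1 (hlim t ht) hev
end

section
/- Let g ∈ C¹([0,1]) with g(0) = 0 and x ≥ 0. As ε → 0, the solutions f^ε of f^ε(t) = x + ε⁻¹∫₀ᵗ (f^ε(s))⁻ ds + g(t) converge uniformly on [0,1] (along a subsequence) to f, and ε⁻¹∫₀^· (f^ε(s))⁻ ds converges uniformly to φ, where (f, φ) is the unique solution of the Skorohod equation: φ continuous nondecreasing with φ(0)=0, f = x + φ + g ≥ 0, and ∫₀¹ 1_{f(s)>0} dφ(s) = 0. -/
open Set Filter intervalIntegral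

/-- Penalization approximation of the Skorohod problem for `g ∈ C¹([0,1])`, `g 0 = 0`,
`x ≥ 0`: along a subsequence `εₖ → 0⁺`, the penalized solutions `F εₖ` converge
uniformly on `[0,1]` to `f` and the penalization terms `εₖ⁻¹∫₀^· (F εₖ s)⁻ ds`
converge uniformly to `φ`, where `(f, φ)` solves the Skorohod equation:
`φ` is continuous, nondecreasing, `φ 0 = 0`, `f = x + φ + g ≥ 0` on `[0,1]`, and
`φ` is constant on intervals where `f > 0` (i.e. `∫₀¹ 1_{f>0} dφ = 0`). -/
theorem penalized_ODE_to_skorohod (g g' : ℝ → ℝ) (x : ℝ)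
    (hx : 0 ≤ x) (hg0 : g 0 = 0)
    (hg' : ∀ t ∈ Icc (0 : ℝ) 1, HasDerivWithinAt g (g' t) (Icc 0 1) t)
    (hg'c : ContinuousOn g' (Icc 0 1))
    (F : ℝ → ℝ → ℝ)
    (hFc : ∀ ε : ℝ, 0 < ε → ContinuousOn (F ε) (Icc 0 1))
    (hF : ∀ ε : ℝ, 0 < ε → ∀ t ∈ Icc (0 : ℝ) 1,
      F ε t = x + ε⁻¹ * (∫ s in (0 : ℝ)..t, max (-(F ε s)) 0) + g t) :
    ∃ (εseq : ℕ → ℝ) (f φ : ℝ → ℝ),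
      (∀ k, 0 < εseq k) ∧ Tendsto εseq atTop (nhds 0) ∧
      ContinuousOn φ (Icc 0 1) ∧ MonotoneOn φ (Icc 0 1) ∧ φ 0 = 0 ∧
      (∀ t ∈ Icc (0 : ℝ) 1, f t = x + φ t + g t ∧ 0 ≤ f t) ∧
      (∀ s ∈ Icc (0 : ℝ) 1, ∀ t ∈ Icc (0 : ℝ) 1, s ≤ t →
        (∀ u ∈ Icc s t, 0 < f u) → φ s = φ t) ∧
      TendstoUniformlyOn (fun k => F (εseq k)) f atTop (Icc 0 1) ∧
      TendstoUniformlyOn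
        (fun k t => (εseq k)⁻¹ * ∫ s in (0 : ℝ)..t, max (-(F (εseq k) s)) 0)
        φ atTop (Icc 0 1) := by
  have hI : (0:ℝ) ∈ Icc (0:ℝ) 1 := ⟨le_refl 0, zero_le_one⟩
  obtain ⟨C, hC⟩ := isCompact_Icc.exists_bound_of_continuousOn hg'c
  set L : ℝ := max C 0 with hLdef
  have hL0 : 0 ≤ L := le_max_right _ _
  have hg'L : ∀ s ∈ Icc (0:ℝ) 1, |g' s| ≤ L := fun s hs =>
    le_trans (by simpa using hC s hs) (le_max_left _ _)
  have hgc : ContinuousOn g (Icc 0 1) := fun t ht => (hg' t ht).continuousWithinAt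
  have hgLip : ∀ s ∈ Icc (0:ℝ) 1, ∀ t ∈ Icc (0:ℝ) 1, |g t - g s| ≤ L * |t - s| := by
    intro s hs t ht
    have := (convex_Icc (0:ℝ) 1).norm_image_sub_le_of_norm_hasDerivWithin_le hg'
      (fun u hu => by simpa [Real.norm_eq_abs] using hg'L u hu) hs ht
    simpa [Real.norm_eq_abs] using this
  set hp : ℝ → ℝ := fun u => max (-(x + g u)) 0 with hpdef
  have hpc : ContinuousOn hp (Icc 0 1) :=
    ((continuousOn_const.add hgc).neg).sup' continuousOn_const
  have hp0 : hp 0 = 0 := by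
    simp only [hpdef, hg0, add_zero]
    exact max_eq_right (neg_nonpos.mpr hx)
  have hpnn : ∀ u, 0 ≤ hp u := fun u => le_max_right _ _
  set φ : ℝ → ℝ := fun t => sSup (hp '' Icc 0 t) with hφdef
  have hbdd : ∀ t ∈ Icc (0:ℝ) 1, BddAbove (hp '' Icc 0 t) := fun t ht =>
    (isCompact_Icc.image_of_continuousOn (hpc.mono (Icc_subset_Icc_right ht.2))).bddAbove
  have hne : ∀ t ∈ Icc (0:ℝ) 1, (hp '' Icc 0 t).Nonempty := fun t ht =>
    (nonempty_Icc.mpr ht.1).image _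
  have hφ_ge : ∀ t ∈ Icc (0:ℝ) 1, ∀ u ∈ Icc (0:ℝ) t, hp u ≤ φ t := fun t ht u hu =>
    le_csSup (hbdd t ht) (mem_image_of_mem _ hu)
  have hφnn : ∀ t ∈ Icc (0:ℝ) 1, 0 ≤ φ t := fun t ht =>
    hp0 ▸ hφ_ge t ht 0 ⟨le_rfl, ht.1⟩
  have hφ0 : φ 0 = 0 := by
    simp only [hφdef, Icc_self, image_singleton, csSup_singleton]
    exact hp0
  have hφmono : MonotoneOn φ (Icc 0 1) := by
    intro s hs t ht hst
    exact csSup_le_csSup (hbdd t ht) (hne s hs) (image_mono (Icc_subset_Icc_right hst))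
  have hφLip : ∀ s ∈ Icc (0:ℝ) 1, ∀ t ∈ Icc (0:ℝ) 1, s ≤ t → φ t ≤ φ s + L * (t - s) := by
    intro s hs t ht hst
    refine csSup_le (hne t ht) ?_
    rintro y ⟨u, hu, rfl⟩
    have hps : hp s ≤ φ s := hφ_ge s hs s ⟨hs.1, le_rfl⟩
    by_cases hus : u ≤ s
    · have := hφ_ge s hs u ⟨hu.1, hus⟩
      nlinarith
    · push_neg at hus
      have hu1 : u ∈ Icc (0:ℝ) 1 := ⟨hu.1, le_trans hu.2 ht.2⟩
      have h1 : |hp u - hp s| ≤ |(-(x + g u)) - (-(x + g s))| := abs_max_sub_max_le_abs _ _ _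
      have h2 : (-(x + g u)) - (-(x + g s)) = g s - g u := by ring
      have h3 : |g s - g u| ≤ L * |s - u| := hgLip u hu1 s hs
      have h4 : hp u - hp s ≤ L * (u - s) := by
        calc hp u - hp s ≤ |hp u - hp s| := le_abs_self _
          _ ≤ L * |s - u| := h1.trans (by rw [h2]; exact h3)
          _ = L * (u - s) := by rw [abs_of_nonpos (by linarith)]; ring
      nlinarith [hu.2]
  have hφcont : ContinuousOn φ (Icc 0 1) := by
    have key : ∀ a ∈ Icc (0:ℝ) 1, ∀ b ∈ Icc (0:ℝ) 1, a ≤ b →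
        dist (φ a) (φ b) ≤ L * dist a b := by
      intro a ha b hb hab
      rw [Real.dist_eq, Real.dist_eq]
      have h1 := hφmono ha hb hab
      have h2 := hφLip a ha b hb hab
      rw [abs_of_nonpos (by linarith), abs_of_nonpos (by linarith)]
      linarith
    refine LipschitzOnWith.continuousOn (K := ⟨L, hL0⟩) ?_
    refine LipschitzOnWith.of_dist_le_mul ?_
    intro a ha b hb
    rcases le_total a b with h | h
    · exact key a ha b hb h
    · rw [dist_comm, dist_comm a b]; exact key b hb a ha h
  have hfnn : ∀ t ∈ Icc (0:ℝ) 1, 0 ≤ x + φ t + g t := by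
    intro t ht
    have h1 : -(x + g t) ≤ φ t := le_trans (le_max_left _ _) (hφ_ge t ht t ⟨ht.1, le_rfl⟩)
    linarith
  have hflat : ∀ s ∈ Icc (0:ℝ) 1, ∀ t ∈ Icc (0:ℝ) 1, s ≤ t →
      (∀ u ∈ Icc s t, 0 < x + φ u + g u) → φ s = φ t := by
    intro s hs t ht hst hpos
    refine le_antisymm (hφmono hs ht hst) ?_
    obtain ⟨u, hu, hmax⟩ := isCompact_Icc.exists_sSup_image_eq (nonempty_Icc.mpr ht.1)
      (hpc.mono (Icc_subset_Icc_right ht.2))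
    have hφt : φ t = hp u := hmax
    by_contra hlt
    push_neg at hlt
    have hu1 : u ∈ Icc (0:ℝ) 1 := ⟨hu.1, hu.2.trans ht.2⟩
    have hus : s < u := by
      by_contra h
      push_neg at h
      exact absurd (hφt ▸ hφ_ge s hs u ⟨hu.1, h⟩) (not_le.mpr hlt)
    have hppos : 0 < hp u := lt_of_le_of_lt (hφnn s hs) (hφt ▸ hlt)
    have h5 : hp u = -(x + g u) := by
      rcases lt_or_ge 0 (-(x + g u)) with h | h
      · exact max_eq_left h.le
      · exfalso
        have : hp u = 0 := max_eq_right h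
        linarith
    have h6 : φ u ≤ φ t := hφmono hu1 ht hu.2
    have h7 := hpos u ⟨hus.le, hu.2⟩
    rw [hφt, h5] at h6
    linarith
  -- main estimate for the penalized equation
  have key : ∀ ε : ℝ, 0 < ε → ∀ t ∈ Icc (0:ℝ) 1,
      |ε⁻¹ * (∫ s in (0:ℝ)..t, max (-(F ε s)) 0) - φ t| ≤ L * ε := by
    intro ε hε
    set ρ : ℝ → ℝ := fun s => max (-(F ε s)) 0 with hρdef
    have hρc : ContinuousOn ρ (Icc 0 1) := ((hFc ε hε).neg).sup' continuousOn_const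
    have hρnn : ∀ s, 0 ≤ ρ s := fun s => le_max_right _ _
    have hρint : ∀ a ∈ Icc (0:ℝ) 1, ∀ b ∈ Icc (0:ℝ) 1,
        IntervalIntegrable ρ MeasureTheory.volume a b :=
      fun a ha b hb => (hρc.mono (uIcc_subset_Icc ha hb)).intervalIntegrable
    set ψ : ℝ → ℝ := fun t => ε⁻¹ * ∫ s in (0:ℝ)..t, ρ s with hψdef
    have hψ0 : ψ 0 = 0 := by simp [hψdef]
    have hψmono : ∀ a ∈ Icc (0:ℝ) 1, ∀ b ∈ Icc (0:ℝ) 1, a ≤ b → ψ a ≤ ψ b := by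
      intro a ha b hb hab
      have h1 : (∫ s in (0:ℝ)..a, ρ s) + ∫ s in a..b, ρ s = ∫ s in (0:ℝ)..b, ρ s :=
        integral_add_adjacent_intervals (hρint 0 hI a ha) (hρint a ha b hb)
      have h2 : 0 ≤ ∫ s in a..b, ρ s := integral_nonneg hab (fun u _ => hρnn u)
      simp only [hψdef]
      have h3 : (∫ s in (0:ℝ)..a, ρ s) ≤ ∫ s in (0:ℝ)..b, ρ s := by linarith
      exact mul_le_mul_of_nonneg_left h3 (inv_nonneg.mpr hε.le)
    have hψnn : ∀ a ∈ Icc (0:ℝ) 1, 0 ≤ ψ a := fun a ha => hψ0 ▸ hψmono 0 hI a ha ha.1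
    have hψcont : ContinuousOn ψ (Icc 0 1) := by
      refine continuousOn_const.mul ?_
      have hInt : MeasureTheory.IntegrableOn ρ (uIcc (0:ℝ) 1) := by
        rw [uIcc_of_le zero_le_one]
        exact hρc.integrableOn_compact isCompact_Icc
      have := intervalIntegral.continuousOn_primitive_interval hInt
      rwa [uIcc_of_le zero_le_one] at this
    set A : ℝ → ℝ := fun u => x + ψ u + g u with hAdef
    have hAF : ∀ u ∈ Icc (0:ℝ) 1, F ε u = A u := by
      intro u hu
      rw [hF ε hε u hu]
    have hAc : ContinuousOn A (Icc 0 1) := (continuousOn_const.add hψcont).add hgc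
    have hAderiv : ∀ u ∈ Ioo (0:ℝ) 1, HasDerivAt A (ε⁻¹ * ρ u + g' u) u := by
      intro u hu
      have hmem : Icc (0:ℝ) 1 ∈ nhds u := Icc_mem_nhds hu.1 hu.2
      have h1 : HasDerivAt (fun y => ∫ s in (0:ℝ)..y, ρ s) (ρ u) u := by
        refine integral_hasDerivAt_right (hρint 0 hI u ⟨hu.1.le, hu.2.le⟩)
          ⟨Icc 0 1, hmem, (hρc.aestronglyMeasurable measurableSet_Icc)⟩ ?_
        exact hρc.continuousAt hmem
      have h2 : HasDerivAt g (g' u) u := (hg' u ⟨hu.1.le, hu.2.le⟩).hasDerivAt hmem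
      exact ((h1.const_mul ε⁻¹).const_add x).add h2
    -- Claim 1 : A ≥ -(L ε)
    have hFlb : ∀ t ∈ Icc (0:ℝ) 1, -(L * ε) ≤ A t := by
      intro t ht
      by_contra hcon
      push_neg at hcon
      set S : Set ℝ := Icc 0 t ∩ A ⁻¹' (Ici (-(L * ε))) with hSdef
      have hS0 : (0:ℝ) ∈ S := by
        refine ⟨⟨le_rfl, ht.1⟩, ?_⟩
        have : A 0 = x := by simp [hAdef, hψ0, hg0]
        simp only [mem_preimage, mem_Ici, this]
        nlinarith [mul_nonneg hL0 hε.le]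
      have hScl : IsClosed S :=
        (hAc.mono (Icc_subset_Icc_right ht.2)).preimage_isClosed_of_isClosed
          isClosed_Icc isClosed_Ici
      have hScomp : IsCompact S := isCompact_Icc.of_isClosed_subset hScl inter_subset_left
      obtain ⟨t₀, ht₀S, ht₀sup⟩ : ∃ t₀, t₀ ∈ S ∧ ∀ u, u ∈ S → u ≤ t₀ :=
        ⟨sSup S, hScomp.sSup_mem ⟨0, hS0⟩, fun u hu => le_csSup hScomp.bddAbove hu⟩
      have ht₀t : t₀ ≤ t := ht₀S.1.2
      have ht₀0 : 0 ≤ t₀ := ht₀S.1.1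
      have ht₀A : -(L * ε) ≤ A t₀ := ht₀S.2
      have ht₀lt : t₀ < t :=
        lt_of_le_of_ne ht₀t (by rintro rfl; exact absurd hcon (not_lt.mpr ht₀A))
      have hmono : StrictMonoOn A (Icc t₀ t) := by
        refine strictMonoOn_of_hasDerivWithinAt_pos (f' := fun u => ε⁻¹ * ρ u + g' u)
          (convex_Icc t₀ t) (hAc.mono (Icc_subset_Icc ht₀0 ht.2)) ?_ ?_
        · intro u hu
          rw [interior_Icc] at hu
          exact (hAderiv u ⟨lt_of_le_of_lt ht₀0 hu.1, lt_of_lt_of_le hu.2 ht.2⟩).hasDerivWithinAt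
        · intro u hu
          rw [interior_Icc] at hu
          have hu01 : u ∈ Icc (0:ℝ) 1 := ⟨ht₀0.trans hu.1.le, hu.2.le.trans ht.2⟩
          have hunS : u ∉ S := fun hmem =>
            absurd (ht₀sup u hmem) (not_le.mpr hu.1)
          have hAu : A u < -(L * ε) := by
            by_contra h
            push_neg at h
            exact hunS ⟨⟨hu01.1, hu.2.le⟩, h⟩
          have hFu : F ε u = A u := hAF u hu01
          have hρu : ρ u = -(A u) := by
            have hLε : 0 ≤ L * ε := mul_nonneg hL0 hε.le
            simp only [hρdef, hFu]
            exact max_eq_left (by linarith)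
          have h1 : L < ε⁻¹ * ρ u := by
            rw [hρu]
            have h2 : L * ε < -(A u) := by linarith
            calc L = ε⁻¹ * (L * ε) := by field_simp
              _ < ε⁻¹ * (-(A u)) := by
                  exact mul_lt_mul_of_pos_left h2 (inv_pos.mpr hε)
          have := abs_le.mp (hg'L u hu01)
          linarith
      have := hmono ⟨le_rfl, ht₀t⟩ ⟨ht₀t, le_rfl⟩ ht₀lt
      linarith
    -- Claim 2 : ψ ≤ φ
    have hub : ∀ t ∈ Icc (0:ℝ) 1, ψ t ≤ φ t := by
      intro t ht
      by_contra hcon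
      push_neg at hcon
      set S : Set ℝ := Icc 0 t ∩ (fun u => φ u - ψ u) ⁻¹' (Ici 0) with hSdef
      have hS0 : (0:ℝ) ∈ S := by
        refine ⟨⟨le_rfl, ht.1⟩, ?_⟩
        simp only [mem_preimage, mem_Ici, hφ0, hψ0, sub_zero, le_refl]
      have hScl : IsClosed S :=
        (((hφcont.sub hψcont)).mono (Icc_subset_Icc_right ht.2)).preimage_isClosed_of_isClosed
          isClosed_Icc isClosed_Ici
      have hScomp : IsCompact S := isCompact_Icc.of_isClosed_subset hScl inter_subset_left
      obtain ⟨t₀, ht₀S, ht₀sup⟩ : ∃ t₀, t₀ ∈ S ∧ ∀ u, u ∈ S → u ≤ t₀ :=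
        ⟨sSup S, hScomp.sSup_mem ⟨0, hS0⟩, fun u hu => le_csSup hScomp.bddAbove hu⟩
      have ht₀0 : 0 ≤ t₀ := ht₀S.1.1
      have ht₀t : t₀ ≤ t := ht₀S.1.2
      have ht₀1 : t₀ ∈ Icc (0:ℝ) 1 := ⟨ht₀0, ht₀t.trans ht.2⟩
      have ht₀ψφ : ψ t₀ ≤ φ t₀ := by
        have := ht₀S.2
        simp only [mem_preimage, mem_Ici] at this
        linarith
      have ht₀lt : t₀ < t := lt_of_le_of_ne ht₀t (by rintro rfl; linarith)
      have hρ0' : EqOn ρ 0 (Ioc t₀ t) := by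
        intro u hu
        have hu01 : u ∈ Icc (0:ℝ) 1 := ⟨ht₀0.trans hu.1.le, hu.2.trans ht.2⟩
        have hunS : u ∉ S := fun hmem =>
          absurd (ht₀sup u hmem) (not_le.mpr hu.1)
        have hφψ : φ u < ψ u := by
          by_contra h
          push_neg at h
          refine hunS ⟨⟨hu01.1, hu.2⟩, ?_⟩
          simp only [mem_preimage, mem_Ici]
          linarith
        have h1 : -(x + g u) ≤ φ u := le_trans (le_max_left _ _) (hφ_ge u hu01 u ⟨hu01.1, le_rfl⟩)
        have h2 : 0 < F ε u := by
          rw [hAF u hu01]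
          simp only [hAdef]
          linarith
        show ρ u = 0
        simp only [hρdef]
        exact max_eq_right (neg_nonpos.mpr h2.le)
      have hint0 : (∫ s in t₀..t, ρ s) = 0 := by
        rw [intervalIntegral.integral_of_le ht₀lt.le,
          MeasureTheory.setIntegral_congr_fun measurableSet_Ioc hρ0']
        simp
      have hadd : ψ t = ψ t₀ := by
        have h1 : (∫ s in (0:ℝ)..t₀, ρ s) + ∫ s in t₀..t, ρ s = ∫ s in (0:ℝ)..t, ρ s :=
          integral_add_adjacent_intervals (hρint 0 hI t₀ ht₀1) (hρint t₀ ht₀1 t ht)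
        show ε⁻¹ * (∫ s in (0:ℝ)..t, ρ s) = ε⁻¹ * ∫ s in (0:ℝ)..t₀, ρ s
        rw [← h1, hint0]
        ring
      have := hφmono ht₀1 ht ht₀t
      linarith
    -- Claim 3 : φ - L ε ≤ ψ
    have hlb : ∀ t ∈ Icc (0:ℝ) 1, φ t ≤ ψ t + L * ε := by
      intro t ht
      refine csSup_le (hne t ht) ?_
      rintro y ⟨u, hu, rfl⟩
      have hu01 : u ∈ Icc (0:ℝ) 1 := ⟨hu.1, hu.2.trans ht.2⟩
      have h1 : -(L * ε) ≤ A u := hFlb u hu01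
      have h2 : -(x + g u) ≤ ψ u + L * ε := by
        simp only [hAdef] at h1
        linarith
      have h3 : ψ u ≤ ψ t := hψmono u hu01 t ht hu.2
      have h4 : 0 ≤ ψ t + L * ε := by nlinarith [hψnn t ht, mul_nonneg hL0 hε.le]
      exact max_le (by linarith) h4
    intro t ht
    show |ψ t - φ t| ≤ L * ε
    rw [abs_le]
    constructor
    · have := hlb t ht
      linarith
    · have := hub t ht
      have := mul_nonneg hL0 hε.le
      linarith
  -- assemble
  have hεpos : ∀ k : ℕ, (0:ℝ) < 1 / (k + 1 : ℝ) := fun k => by positivity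
  refine ⟨fun k => 1 / (k + 1 : ℝ), fun t => x + φ t + g t, φ, hεpos,
    tendsto_one_div_add_atTop_nhds_zero_nat, hφcont, hφmono, hφ0,
    fun t ht => ⟨rfl, hfnn t ht⟩, hflat, ?_, ?_⟩
  · rw [Metric.tendstoUniformlyOn_iff]
    intro δ hδ
    have h1 : Tendsto (fun k : ℕ => L * (1 / (k + 1 : ℝ))) atTop (nhds 0) := by
      simpa using tendsto_one_div_add_atTop_nhds_zero_nat.const_mul L
    filter_upwards [h1.eventually_lt_const hδ] with k hk t ht
    have hεk := hεpos k
    have h2 := key _ hεk t ht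
    have h3 := hF _ hεk t ht
    rw [Real.dist_eq]
    have h4 : (x + φ t + g t) - F (1 / (k + 1 : ℝ)) t =
        -((1 / (k + 1 : ℝ))⁻¹ * (∫ s in (0:ℝ)..t, max (-(F (1 / (k + 1 : ℝ)) s)) 0) - φ t) := by
      rw [h3]; ring
    rw [h4, abs_neg]
    exact lt_of_le_of_lt h2 hk
  · rw [Metric.tendstoUniformlyOn_iff]
    intro δ hδ
    have h1 : Tendsto (fun k : ℕ => L * (1 / (k + 1 : ℝ))) atTop (nhds 0) := by
      simpa using tendsto_one_div_add_atTop_nhds_zero_nat.const_mul L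
    filter_upwards [h1.eventually_lt_const hδ] with k hk t ht
    have hεk := hεpos k
    have h2 := key _ hεk t ht
    rw [Real.dist_eq, abs_sub_comm]
    exact lt_of_le_of_lt h2 hk
end

section
/- Let g ∈ C([0,1]) with g(0) = 0 and x ≥ 0. For ε > 0 let f_g^ε solve f_g^ε(t) = x + ε⁻¹∫₀ᵗ (f_g^ε(s))⁻ ds + g(t). Then f_g^ε converges in C([0,1]) (supremum norm) as ε → 0 to the solution f of the Skorohod equation with driver g and initial value x. -/
open Set Filter intervalIntegral

/-- Penalization approximation with merely continuous driver: for `g ∈ C([0,1])`,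
`g 0 = 0`, `x ≥ 0`, the penalized solutions `F ε` converge uniformly on `[0,1]`,
as `ε → 0⁺`, to the Skorohod solution
`f t = x + φ t + g t` with `φ t = max {0, max_{0 ≤ s ≤ t} -(x + g s)}`. -/
theorem penalized_ODE_to_skorohod_continuous (g : ℝ → ℝ) (x : ℝ)
    (hg : ContinuousOn g (Icc 0 1)) (hg0 : g 0 = 0) (hx : 0 ≤ x)
    (F : ℝ → ℝ → ℝ)
    (hFc : ∀ ε : ℝ, 0 < ε → ContinuousOn (F ε) (Icc 0 1))
    (hF : ∀ ε : ℝ, 0 < ε → ∀ t ∈ Icc (0 : ℝ) 1,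
      F ε t = x + ε⁻¹ * (∫ s in (0 : ℝ)..t, max (-(F ε s)) 0) + g t)
    (φ f : ℝ → ℝ)
    (hφ : ∀ t, φ t = max 0 (sSup ((fun s => -(x + g s)) '' Icc 0 t)))
    (hf : ∀ t, f t = x + φ t + g t) :
    TendstoUniformlyOn F f (nhdsWithin 0 (Ioi (0 : ℝ))) (Icc 0 1) := by
  -- basic facts about φ
  have hIm : ∀ t ∈ Icc (0:ℝ) 1, BddAbove ((fun s => -(x + g s)) '' Icc 0 t) := by
    intro t ht
    obtain ⟨G, hG⟩ := isCompact_Icc.exists_bound_of_continuousOn hg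
    refine ⟨G, ?_⟩
    rintro y ⟨u, hu, rfl⟩
    have hu1 : u ∈ Icc (0:ℝ) 1 := ⟨hu.1, le_trans hu.2 ht.2⟩
    have h1 := hG u hu1
    rw [Real.norm_eq_abs] at h1
    have h2 := neg_le_of_abs_le h1
    show -(x + g u) ≤ G
    linarith
  have hImne : ∀ t, 0 ≤ t → ((fun s => -(x + g s)) '' Icc 0 t).Nonempty :=
    fun t ht => ⟨-(x + g 0), ⟨0, ⟨le_rfl, ht⟩, rfl⟩⟩
  have hφmono : ∀ a b : ℝ, 0 ≤ a → a ≤ b → b ≤ 1 → φ a ≤ φ b := by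
    intro a b ha hab hb1
    rw [hφ a, hφ b]
    exact max_le_max le_rfl (csSup_le_csSup (hIm b ⟨le_trans ha hab, hb1⟩)
      (hImne a ha) (image_mono (Icc_subset_Icc le_rfl hab)))
  have hφ_ge : ∀ u ∈ Icc (0:ℝ) 1, -(x + g u) ≤ φ u := by
    intro u hu
    rw [hφ u]
    exact le_trans (le_csSup (hIm u hu) ⟨u, ⟨hu.1, le_rfl⟩, rfl⟩) (le_max_right _ _)
  have hφnn : ∀ u, 0 ≤ φ u := fun u => by rw [hφ u]; exact le_max_left _ _
  have hφ0 : φ 0 = 0 := by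
    rw [hφ 0, Icc_self, image_singleton, csSup_singleton, hg0, add_zero]
    exact max_eq_left (by linarith)
  have hfnn : ∀ u ∈ Icc (0:ℝ) 1, 0 ≤ f u := by
    intro u hu; rw [hf u]; have := hφ_ge u hu; linarith
  rw [Metric.tendstoUniformlyOn_iff]
  intro δ hδ
  obtain ⟨G, hG⟩ := isCompact_Icc.exists_bound_of_continuousOn hg
  have hG0 : (0:ℝ) ≤ G := le_trans (norm_nonneg _) (hG 0 ⟨le_rfl, zero_le_one⟩)
  obtain ⟨d, hd, hda⟩ := (Metric.uniformContinuousOn_iff).1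
    (isCompact_Icc.uniformContinuousOn_of_continuous hg) (δ/8) (by linarith)
  obtain ⟨ε₀, hε₀def⟩ : ∃ e : ℝ, e = δ * d / (16 * G + 8) := ⟨_, rfl⟩
  have hε₀ : 0 < ε₀ := by
    rw [hε₀def]; apply div_pos (mul_pos hδ hd); linarith
  filter_upwards [Ioo_mem_nhdsGT_of_mem (Set.mem_Ico.2 ⟨le_rfl, hε₀⟩)] with ε hε
  obtain ⟨hεpos, hεlt⟩ := hε
  intro t ht
  -- set up φε
  obtain ⟨φε, hφεdef⟩ : ∃ h : ℝ → ℝ, h = fun u => F ε u - x - g u := ⟨_, rfl⟩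
  have hFeq : ∀ u, F ε u = x + φε u + g u := by
    intro u; rw [hφεdef]; ring
  have hφεc : ContinuousOn φε (Icc 0 1) := by
    rw [hφεdef]; exact ((hFc ε hεpos).sub continuousOn_const).sub hg
  have hintc : ContinuousOn (fun s => max (-(F ε s)) 0) (Icc 0 1) :=
    (continuous_neg.max continuous_const).comp_continuousOn (hFc ε hεpos)
  have hii : ∀ a b : ℝ, a ∈ Icc (0:ℝ) 1 → b ∈ Icc (0:ℝ) 1 →
      IntervalIntegrable (fun s => max (-(F ε s)) 0) MeasureTheory.volume a b := by
    intro a b ha hb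
    exact (hintc.mono (uIcc_subset_Icc ha hb)).intervalIntegrable
  have hφε_int : ∀ u ∈ Icc (0:ℝ) 1,
      φε u = ε⁻¹ * ∫ s in (0:ℝ)..u, max (-(F ε s)) 0 := by
    intro u hu
    rw [hφεdef]; simp only
    rw [hF ε hεpos u hu]; ring
  have hφε0 : φε 0 = 0 := by
    rw [hφε_int 0 ⟨le_rfl, zero_le_one⟩, intervalIntegral.integral_same]; ring
  have hφεdiff : ∀ a b : ℝ, a ∈ Icc (0:ℝ) 1 → b ∈ Icc (0:ℝ) 1 →
      φε b - φε a = ε⁻¹ * ∫ s in a..b, max (-(F ε s)) 0 := by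
    intro a b ha hb
    rw [hφε_int a ha, hφε_int b hb,
      ← intervalIntegral.integral_add_adjacent_intervals
        (hii 0 a ⟨le_rfl, zero_le_one⟩ ha) (hii a b ha hb)]
    ring
  have hφεmono : ∀ a b : ℝ, a ∈ Icc (0:ℝ) 1 → b ∈ Icc (0:ℝ) 1 → a ≤ b → φε a ≤ φε b := by
    intro a b ha hb hab
    have h1 : 0 ≤ ∫ s in a..b, max (-(F ε s)) 0 :=
      intervalIntegral.integral_nonneg hab (fun u _ => le_max_right _ _)
    have h3 : 0 ≤ φε b - φε a := by
      rw [hφεdiff a b ha hb]; exact mul_nonneg (by positivity) h1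
    linarith
  have hφεnn : ∀ u ∈ Icc (0:ℝ) 1, 0 ≤ φε u := by
    intro u hu
    have := hφεmono 0 u ⟨le_rfl, zero_le_one⟩ hu hu.1
    linarith [hφε0]
  -- Claim A : F ε uniformly bounded below by -δ/4
  have claimA : ∀ u ∈ Icc (0:ℝ) 1, -(δ/4) ≤ F ε u := by
    intro u hu
    by_contra hcon
    push_neg at hcon
    set S : Set ℝ := Icc 0 u ∩ (F ε) ⁻¹' (Ici (-(δ/8))) with hSdef
    have hSsub : S ⊆ Icc (0:ℝ) 1 := fun v hv => ⟨hv.1.1, le_trans hv.1.2 hu.2⟩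
    have hS0 : (0:ℝ) ∈ S := by
      constructor
      · exact ⟨le_rfl, hu.1⟩
      · have : F ε 0 = x := by
          rw [hF ε hεpos 0 ⟨le_rfl, zero_le_one⟩, intervalIntegral.integral_same, hg0]; ring
        simp only [Set.mem_preimage, this, Set.mem_Ici]
        linarith
    have hSbdd : BddAbove S := ⟨u, fun v hv => hv.1.2⟩
    have hSclosed : IsClosed S :=
      ((hFc ε hεpos).mono (Icc_subset_Icc le_rfl hu.2)).preimage_isClosed_of_isClosed
        isClosed_Icc isClosed_Ici
    obtain ⟨s, hsdef⟩ : ∃ s : ℝ, s = sSup S := ⟨_, rfl⟩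
    have hsmem : s ∈ S := hsdef ▸ hSclosed.csSup_mem ⟨0, hS0⟩ hSbdd
    have hsIcc : s ∈ Icc (0:ℝ) 1 := hSsub hsmem
    have hFs : -(δ/8) ≤ F ε s := hsmem.2
    have hsu : s ≤ u := hsmem.1.2
    have hslt : s < u := by
      rcases lt_or_eq_of_le hsu with h | h
      · exact h
      · exfalso; rw [h] at hFs; linarith
    have hbetw : ∀ v, s < v → v ≤ u → F ε v < -(δ/8) := by
      intro v hv1 hv2
      by_contra hcv
      push_neg at hcv
      have hvS : v ∈ S := ⟨⟨le_trans hsIcc.1 (le_of_lt hv1), hv2⟩, hcv⟩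
      have : v ≤ s := hsdef ▸ le_csSup hSbdd hvS
      linarith
    -- integral lower bound
    have hib : (u - s) * (δ/8) ≤ ∫ v in s..u, max (-(F ε v)) 0 := by
      have hae : (fun _ : ℝ => δ/8) ≤ᶠ[MeasureTheory.ae
          (MeasureTheory.volume.restrict (Icc s u))] fun v => max (-(F ε v)) 0 := by
        have : ∀ᵐ v ∂(MeasureTheory.volume.restrict (Icc s u)),
            δ/8 ≤ max (-(F ε v)) 0 := by
          rw [MeasureTheory.ae_restrict_iff' measurableSet_Icc, MeasureTheory.ae_iff]
          refine MeasureTheory.measure_mono_null (t := {s}) ?_ Real.volume_singleton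
          intro v hv
          simp only [Set.mem_setOf_eq, not_forall, not_le] at hv
          obtain ⟨hv1, hv2⟩ := hv
          by_contra hvs
          have hv3 : s < v := lt_of_le_of_ne hv1.1 (fun h => hvs (by simp [← h]))
          have h4 := hbetw v hv3 hv1.2
          have h5 : δ/8 ≤ -(F ε v) := by linarith
          exact absurd (le_trans h5 (le_max_left _ _)) (not_le.2 hv2)
        exact this
      have hmono := intervalIntegral.integral_mono_ae_restrict (μ := MeasureTheory.volume)
        (le_of_lt hslt) intervalIntegrable_const (hii s u hsIcc hu) hae
      calc (u - s) * (δ/8) = ∫ _ in s..u, (δ/8) := by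
            rw [intervalIntegral.integral_const]; simp [smul_eq_mul]
        _ ≤ _ := hmono
    have hFdiff : F ε u - F ε s = ε⁻¹ * (∫ v in s..u, max (-(F ε v)) 0) + (g u - g s) := by
      rw [hF ε hεpos u hu, hF ε hεpos s hsIcc,
        ← intervalIntegral.integral_add_adjacent_intervals
          (hii 0 s ⟨le_rfl, zero_le_one⟩ hsIcc) (hii s u hsIcc hu)]
      ring
    have hFus : F ε u - F ε s < -(δ/8) := by linarith
    rcases lt_or_ge (u - s) d with hcase | hcase
    · -- small gap : modulus of continuity gives contradiction
      have hgd : dist (g u) (g s) < δ/8 := by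
        apply hda u hu s hsIcc
        rw [Real.dist_eq, abs_of_nonneg (by linarith)]
        exact hcase
      rw [Real.dist_eq] at hgd
      have h1 : 0 ≤ ε⁻¹ * (∫ v in s..u, max (-(F ε v)) 0) :=
        mul_nonneg (by positivity)
          (intervalIntegral.integral_nonneg (le_of_lt hslt) (fun v _ => le_max_right _ _))
      have h2 : -(g u - g s) ≤ |g u - g s| := neg_le_abs _
      linarith
    · -- large gap : ε small gives contradiction
      have h1 : ε⁻¹ * ((u - s) * (δ/8)) ≤ ε⁻¹ * (∫ v in s..u, max (-(F ε v)) 0) :=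
        mul_le_mul_of_nonneg_left hib (by positivity)
      have h2 : ε⁻¹ * (d * (δ/8)) ≤ ε⁻¹ * ((u - s) * (δ/8)) := by
        apply mul_le_mul_of_nonneg_left _ (by positivity)
        apply mul_le_mul_of_nonneg_right hcase (by linarith)
      have h3 : 2 * G + 1 < ε⁻¹ * (d * (δ/8)) := by
        rw [lt_inv_mul_iff₀ hεpos]
        calc ε * (2 * G + 1) < ε₀ * (2 * G + 1) := by
              apply mul_lt_mul_of_pos_right hεlt; linarith
          _ ≤ d * (δ/8) := by
              rw [hε₀def, div_mul_eq_mul_div,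
                div_le_iff₀ (by linarith : (0:ℝ) < 16 * G + 8)]
              nlinarith [mul_pos hδ hd]
      have hgu := hG u hu
      have hgs := hG s hsIcc
      rw [Real.norm_eq_abs] at hgu hgs
      have hgu' := abs_le.1 hgu
      have hgs' := abs_le.1 hgs
      linarith [hgu'.1, hgu'.2, hgs'.1, hgs'.2]
  -- Claim B : φε ≤ φ on [0,1]
  have claimB : ∀ u ∈ Icc (0:ℝ) 1, φε u ≤ φ u := by
    intro u hu
    by_contra hcon
    push_neg at hcon
    set S : Set ℝ := {v | v ∈ Icc 0 u ∧ φε v ≤ φ v} with hSdef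
    have hSsub : S ⊆ Icc (0:ℝ) 1 := fun v hv => ⟨hv.1.1, le_trans hv.1.2 hu.2⟩
    have hS0 : (0:ℝ) ∈ S := ⟨⟨le_rfl, hu.1⟩, by rw [hφε0, hφ0]⟩
    have hSbdd : BddAbove S := ⟨u, fun v hv => hv.1.2⟩
    obtain ⟨s, hsdef⟩ : ∃ s : ℝ, s = sSup S := ⟨_, rfl⟩
    have hs0 : 0 ≤ s := hsdef ▸ le_csSup hSbdd hS0
    have hsu : s ≤ u := hsdef ▸ csSup_le ⟨0, hS0⟩ (fun v hv => hv.1.2)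
    have hsIcc : s ∈ Icc (0:ℝ) 1 := ⟨hs0, le_trans hsu hu.2⟩
    -- φε s ≤ φ s using continuity of φε and monotonicity of φ
    have hss : φε s ≤ φ s := by
      have hcl : s ∈ closure S := hsdef ▸ csSup_mem_closure ⟨0, hS0⟩ hSbdd
      have hne : (nhdsWithin s S).NeBot := mem_closure_iff_nhdsWithin_neBot.1 hcl
      have htend : Tendsto φε (nhdsWithin s S) (nhds (φε s)) :=
        (hφεc s hsIcc).mono_left (nhdsWithin_mono s hSsub)
      refine le_of_tendsto htend ?_
      filter_upwards [self_mem_nhdsWithin] with v hv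
      have hvs : v ≤ s := hsdef ▸ le_csSup hSbdd hv
      exact le_trans hv.2 (hφmono v s hv.1.1 hvs hsIcc.2)
    have hslt : s < u := by
      rcases lt_or_eq_of_le hsu with h | h
      · exact h
      · exfalso; rw [h] at hss; linarith
    have hbetw : ∀ v, s < v → v ≤ u → φ v < φε v := by
      intro v hv1 hv2
      by_contra hcv
      push_neg at hcv
      have hvS : v ∈ S := ⟨⟨le_trans hs0 (le_of_lt hv1), hv2⟩, hcv⟩
      have : v ≤ s := hsdef ▸ le_csSup hSbdd hvS
      linarith
    -- the integrand vanishes on (s, u]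
    have hzero : ∫ v in s..u, max (-(F ε v)) 0 = 0 := by
      have hae : (fun v => max (-(F ε v)) 0) ≤ᶠ[MeasureTheory.ae
          (MeasureTheory.volume.restrict (Icc s u))] fun _ : ℝ => (0:ℝ) := by
        have : ∀ᵐ v ∂(MeasureTheory.volume.restrict (Icc s u)),
            max (-(F ε v)) 0 ≤ 0 := by
          rw [MeasureTheory.ae_restrict_iff' measurableSet_Icc, MeasureTheory.ae_iff]
          refine MeasureTheory.measure_mono_null (t := {s}) ?_ Real.volume_singleton
          intro v hv
          simp only [Set.mem_setOf_eq, not_forall, not_le] at hv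
          obtain ⟨hv1, hv2⟩ := hv
          by_contra hvs
          have hv3 : s < v := lt_of_le_of_ne hv1.1 (fun h => hvs (by simp [← h]))
          have hvIcc : v ∈ Icc (0:ℝ) 1 := ⟨le_trans hs0 (le_of_lt hv3), le_trans hv1.2 hu.2⟩
          have h4 := hbetw v hv3 hv1.2
          have h5 : 0 ≤ f v := hfnn v hvIcc
          have h6 : 0 < F ε v := by
            have := hFeq v; have := hf v; linarith
          have h7 : max (-(F ε v)) 0 ≤ 0 := max_le (by linarith) le_rfl
          linarith
        exact this
      have hle : ∫ v in s..u, max (-(F ε v)) 0 ≤ ∫ _ in s..u, (0:ℝ) :=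
        intervalIntegral.integral_mono_ae_restrict (le_of_lt hslt)
          (hii s u hsIcc hu) intervalIntegrable_const hae
      have hge : 0 ≤ ∫ v in s..u, max (-(F ε v)) 0 :=
        intervalIntegral.integral_nonneg (le_of_lt hslt) (fun v _ => le_max_right _ _)
      simp only [intervalIntegral.integral_zero] at hle
      linarith
    have hd2 := hφεdiff s u hsIcc hu
    rw [hzero, mul_zero] at hd2
    have hfin : φε u ≤ φ u := by
      have : φε u = φε s := by linarith
      rw [this]
      exact le_trans hss (hφmono s u hs0 hsu hu.2)
    linarith
  -- Claim C : φ ≤ φε + δ/4 on [0,1]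
  have claimC : ∀ u ∈ Icc (0:ℝ) 1, φ u ≤ φε u + δ/4 := by
    intro u hu
    rw [hφ u]
    apply max_le
    · have := hφεnn u hu; linarith
    · apply csSup_le (hImne u hu.1)
      rintro y ⟨v, hv, rfl⟩
      have hvIcc : v ∈ Icc (0:ℝ) 1 := ⟨hv.1, le_trans hv.2 hu.2⟩
      have h1 := claimA v hvIcc
      have h1' := hFeq v
      have h2 := hφεmono v u hvIcc hu hv.2
      show -(x + g v) ≤ φε u + δ/4
      linarith
  -- conclude
  have h1 := claimB t ht
  have h2 := claimC t ht
  rw [Real.dist_eq, hf t, hFeq t, abs_of_nonneg (by linarith)]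
  linarith
end
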